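/- arXiv:1511.05023 — 5 statements merged into one kernel-verified Lean document; each statement's English description precedes it below -/
import Mathlib

section
/- Let A be chosen uniformly at random from the 2^n binary (±1) sequences of length n ≥ 2, let μ(A) = max_{1≤k≤n-1} |c_k| where c_k = ∑_{j=0}^{n-k-1} a_j a_{j+k}, and let ψ = ψ(n) > 0. Then P[μ(A) > √(2nψ)] < 2n/(ψ e^{ψ}). -/
open scoped Classical

/-- The `j`-th entry (as `±1 : ℝ`) of the binary sequence encoded by `b`. -/
noncomputable def rad {n : ℕ} (b : Fin n → Bool) (j : ℕ) : ℝ :=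
  if h : j < n then (if b ⟨j, h⟩ then 1 else -1) else 0

/-- The aperiodic autocorrelation at shift `k`. -/
noncomputable def autocorr {n : ℕ} (b : Fin n → Bool) (k : ℕ) : ℝ :=
  ∑ j ∈ Finset.range (n - k), rad b j * rad b (j + k)

/-- The peak sidelobe level `μ(A) = max_{1 ≤ k ≤ n-1} |c_k|`. -/
noncomputable def psl {n : ℕ} (b : Fin n → Bool) : ℝ :=
  ⨆ k ∈ Finset.Icc 1 (n - 1), |autocorr b k|

/-! ### Auxiliary material -/

noncomputable def sg (b : Bool) : ℝ := if b then 1 else -1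

noncomputable def Ssum (m : ℕ) (x : Fin m → Bool) : ℝ := ∑ j, sg (x j)

lemma mgf_eq (m : ℕ) (l : ℝ) :
    ∑ x : Fin m → Bool, Real.exp (l * Ssum m x) = (Real.exp l + Real.exp (-l)) ^ m := by
  have h1 : ∀ x : Fin m → Bool, Real.exp (l * Ssum m x) = ∏ j, Real.exp (l * sg (x j)) := by
    intro x; rw [← Real.exp_sum, ← Finset.mul_sum]; rfl
  simp only [h1]
  have h2 := Finset.sum_prod_piFinset (ι := Fin m) (Finset.univ : Finset Bool)
      (fun _ b => Real.exp (l * sg b))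
  rw [Fintype.piFinset_univ] at h2
  rw [h2]
  have h3 : ∀ j : Fin m, ∑ b ∈ (Finset.univ : Finset Bool), Real.exp (l * sg b)
      = Real.exp l + Real.exp (-l) := by
    intro j; rw [Fintype.sum_bool]; simp [sg]
  rw [Finset.prod_congr rfl fun j _ => h3 j, Finset.prod_const, Finset.card_univ,
    Fintype.card_fin]

lemma chernoff_pos (m : ℕ) (t l : ℝ) (hl : 0 ≤ l) :
    ((Finset.univ.filter fun x : Fin m → Bool => t < Ssum m x).card : ℝ)
      ≤ Real.exp (-(l * t)) * (Real.exp l + Real.exp (-l)) ^ m := by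
  set F := Finset.univ.filter fun x : Fin m → Bool => t < Ssum m x with hF
  have h1 : (F.card : ℝ) * Real.exp (l * t) ≤ ∑ x ∈ F, Real.exp (l * Ssum m x) := by
    calc (F.card : ℝ) * Real.exp (l * t) = ∑ _x ∈ F, Real.exp (l * t) := by
          rw [Finset.sum_const, nsmul_eq_mul]
      _ ≤ ∑ x ∈ F, Real.exp (l * Ssum m x) := by
          apply Finset.sum_le_sum
          intro x hx
          have hx' : t < Ssum m x := (Finset.mem_filter.1 hx).2
          exact Real.exp_le_exp.2 (mul_le_mul_of_nonneg_left hx'.le hl)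
  have h2 : ∑ x ∈ F, Real.exp (l * Ssum m x) ≤ ∑ x : Fin m → Bool, Real.exp (l * Ssum m x) :=
    Finset.sum_le_sum_of_subset_of_nonneg (Finset.filter_subset _ _)
      (fun _ _ _ => (Real.exp_pos _).le)
  have h3 : (F.card : ℝ) * Real.exp (l * t) ≤ (Real.exp l + Real.exp (-l)) ^ m := by
    rw [← mgf_eq m l]; exact h1.trans h2
  have h4 : (F.card : ℝ) ≤ ((Real.exp l + Real.exp (-l)) ^ m) / Real.exp (l * t) :=
    (le_div_iff₀ (Real.exp_pos _)).2 h3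
  rwa [div_eq_mul_inv, ← Real.exp_neg, mul_comm] at h4

lemma Ssum_not (m : ℕ) (x : Fin m → Bool) : Ssum m (fun j => !(x j)) = -Ssum m x := by
  rw [Ssum, Ssum, ← Finset.sum_neg_distrib]
  refine Finset.sum_congr rfl fun j _ => ?_
  cases x j <;> simp [sg]

lemma card_neg_eq (m : ℕ) (t : ℝ) :
    (Finset.univ.filter fun x : Fin m → Bool => t < -(Ssum m x)).card
      = (Finset.univ.filter fun x : Fin m → Bool => t < Ssum m x).card := by
  apply Finset.card_nbij' (i := fun x => fun j => !(x j)) (j := fun x => fun j => !(x j))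
  · intro x hx
    simp only [Finset.mem_coe, Finset.mem_filter, Finset.mem_univ, true_and] at hx ⊢
    rw [Ssum_not]; linarith
  · intro x hx
    simp only [Finset.mem_coe, Finset.mem_filter, Finset.mem_univ, true_and] at hx ⊢
    rw [Ssum_not]; linarith
  · intro x _; funext j; simp
  · intro x _; funext j; simp

lemma chernoff_abs (m : ℕ) (hm : 0 < m) (t : ℝ) (ht : 0 ≤ t) :
    ((Finset.univ.filter fun x : Fin m → Bool => t < |Ssum m x|).card : ℝ)
      ≤ 2 * 2 ^ m * Real.exp (-(t ^ 2) / (2 * m)) := by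
  have hsub : (Finset.univ.filter fun x : Fin m → Bool => t < |Ssum m x|)
      ⊆ (Finset.univ.filter fun x : Fin m → Bool => t < Ssum m x)
        ∪ (Finset.univ.filter fun x : Fin m → Bool => t < -(Ssum m x)) := by
    intro x hx
    simp only [Finset.mem_filter, Finset.mem_univ, true_and, Finset.mem_union] at hx ⊢
    exact lt_abs.1 hx
  have hcard : ((Finset.univ.filter fun x : Fin m → Bool => t < |Ssum m x|).card : ℝ)
      ≤ 2 * ((Finset.univ.filter fun x : Fin m → Bool => t < Ssum m x).card : ℝ) := by
    have h1 := Finset.card_le_card hsub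
    have h2 := Finset.card_union_le
      (Finset.univ.filter fun x : Fin m → Bool => t < Ssum m x)
      (Finset.univ.filter fun x : Fin m → Bool => t < -(Ssum m x))
    rw [card_neg_eq] at h2
    exact_mod_cast (h1.trans h2).trans_eq (two_mul _).symm
  set l : ℝ := t / m with hl
  have hl0 : 0 ≤ l := div_nonneg ht (Nat.cast_nonneg m)
  have hm0 : (m : ℝ) ≠ 0 := Nat.cast_ne_zero.2 hm.ne'
  have hch := chernoff_pos m t l hl0
  have hcosh : Real.exp l + Real.exp (-l) ≤ 2 * Real.exp (l ^ 2 / 2) := by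
    have h := Real.cosh_le_exp_half_sq l
    rw [Real.cosh_eq] at h
    linarith
  have hpow : (Real.exp l + Real.exp (-l)) ^ m ≤ (2 * Real.exp (l ^ 2 / 2)) ^ m :=
    pow_le_pow_left₀ (by positivity) hcosh m
  have heq : Real.exp (-(l * t)) * (2 * Real.exp (l ^ 2 / 2)) ^ m
      = 2 ^ m * Real.exp (-(t ^ 2) / (2 * m)) := by
    rw [mul_pow, ← Real.exp_nat_mul, ← mul_assoc, mul_comm (Real.exp (-(l*t))), mul_assoc,
      ← Real.exp_add]
    congr 1
    rw [hl]
    field_simp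
    ring
  calc ((Finset.univ.filter fun x : Fin m → Bool => t < |Ssum m x|).card : ℝ)
      ≤ 2 * ((Finset.univ.filter fun x : Fin m → Bool => t < Ssum m x).card : ℝ) := hcard
    _ ≤ 2 * (Real.exp (-(l * t)) * (Real.exp l + Real.exp (-l)) ^ m) := by linarith
    _ ≤ 2 * (Real.exp (-(l * t)) * (2 * Real.exp (l ^ 2 / 2)) ^ m) := by
        have := mul_le_mul_of_nonneg_left hpow (Real.exp_pos (-(l*t))).le
        linarith
    _ = 2 * 2 ^ m * Real.exp (-(t ^ 2) / (2 * m)) := by rw [heq]; ring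

def recon (k : ℕ) (x i : ℕ → Bool) : ℕ → Bool
  | j =>
    if j < max k 1 then i j
    else (recon k x i (j - max k 1) == x (j - max k 1))
decreasing_by
  have h1 : 1 ≤ max k 1 := le_max_right _ _
  omega

lemma recon_small {k : ℕ} (hk : 1 ≤ k) (x i : ℕ → Bool) {j : ℕ} (h : j < k) :
    recon k x i j = i j := by
  rw [recon]; simp [Nat.max_eq_left hk, h]

lemma recon_big {k : ℕ} (hk : 1 ≤ k) (x i : ℕ → Bool) {j : ℕ} (h : k ≤ j) :
    recon k x i j = (recon k x i (j - k) == x (j - k)) := by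
  rw [recon]; simp [Nat.max_eq_left hk, Nat.not_lt.2 h]

lemma beq_cancel (p q : Bool) : (p == (p == q)) = q := by revert p q; decide

noncomputable def phi (n k : ℕ) (b : Fin n → Bool) : Fin (n - k) → Bool :=
  fun j => (b ⟨j.1, by have := j.2; omega⟩ == b ⟨j.1 + k, by have := j.2; omega⟩)

lemma fiber_card (n k : ℕ) (hk1 : 1 ≤ k) (hkn : k < n) (x : Fin (n - k) → Bool) :
    (Finset.univ.filter fun b : Fin n → Bool => phi n k b = x).card = 2 ^ k := by
  have hcard : (Finset.univ : Finset (Fin k → Bool)).card = 2 ^ k := by simp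
  rw [← hcard]
  set X : ℕ → Bool := fun t => if h : t < n - k then x ⟨t, h⟩ else false with hX
  have key : ∀ b : Fin n → Bool, phi n k b = x → ∀ jv : ℕ, ∀ hjv : jv < n,
      recon k X (fun t => if h : t < k then b ⟨t, h.trans hkn⟩ else false) jv = b ⟨jv, hjv⟩ := by
    intro b hb jv
    induction jv using Nat.strong_induction_on with
    | _ jv ih =>
      intro hjv
      by_cases hcase : jv < k
      · rw [recon_small hk1 _ _ hcase]
        simp [hcase]
      · push_neg at hcase
        rw [recon_big hk1 _ _ hcase]
        rw [ih (jv - k) (by omega) (by omega)]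
        have hm : jv - k < n - k := by omega
        have hx : X (jv - k) = (b ⟨jv - k, by omega⟩ == b ⟨(jv - k) + k, by omega⟩) := by
          rw [hX]
          simp only [hm, dif_pos]
          rw [← hb]
          rfl
        rw [hx]
        have heq : (⟨(jv - k) + k, by omega⟩ : Fin n) = ⟨jv, hjv⟩ := by
          apply Fin.ext; simp; omega
        rw [heq, beq_cancel]
  apply Finset.card_bij'
    (i := fun b _ => fun i : Fin k => b ⟨i.1, i.2.trans hkn⟩)
    (j := fun y _ => fun j : Fin n =>
      recon k X (fun t => if h : t < k then y ⟨t, h⟩ else false) j.1)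
  case hi => intro b _; exact Finset.mem_univ _
  case left_inv =>
    intro b hb
    simp only [Finset.mem_filter, Finset.mem_univ, true_and] at hb
    funext j
    exact key b hb j.1 j.2
  case right_inv =>
    intro y _
    funext i
    show recon k X _ i.1 = y i
    rw [recon_small hk1 _ _ i.2]
    simp [i.2]
  case hj =>
    intro y _
    simp only [Finset.mem_filter, Finset.mem_univ, true_and]
    funext j
    show ((recon k X _ j.1) == (recon k X _ (j.1 + k))) = x j
    have h1 : recon k X (fun t => if h : t < k then y ⟨t, h⟩ else false) (j.1 + k)
        = ((recon k X (fun t => if h : t < k then y ⟨t, h⟩ else false) ((j.1 + k) - k))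
            == X ((j.1 + k) - k)) :=
      recon_big hk1 _ _ (by omega)
    rw [Nat.add_sub_cancel] at h1
    rw [h1, beq_cancel, hX]
    simp [j.2]

lemma count_comp (n k : ℕ) (hk1 : 1 ≤ k) (hkn : k < n) (Q : (Fin (n - k) → Bool) → Prop) :
    (Finset.univ.filter fun b : Fin n → Bool => Q (phi n k b)).card
      = 2 ^ k * (Finset.univ.filter Q).card := by
  rw [Finset.card_eq_sum_card_fiberwise
    (f := phi n k) (t := Finset.univ.filter Q)
    (fun b hb => by
      simp only [Finset.mem_coe, Finset.mem_filter, Finset.mem_univ, true_and] at hb ⊢; exact hb)]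
  have hfib : ∀ x ∈ Finset.univ.filter Q,
      ((Finset.univ.filter fun b : Fin n → Bool => Q (phi n k b)).filter
        fun b => phi n k b = x).card = 2 ^ k := by
    intro x hx
    simp only [Finset.mem_filter, Finset.mem_univ, true_and] at hx
    rw [← fiber_card n k hk1 hkn x]
    congr 1
    ext b
    simp only [Finset.mem_filter, Finset.mem_univ, true_and]
    constructor
    · exact fun h => h.2
    · exact fun h => ⟨h ▸ hx, h⟩
  rw [Finset.sum_congr rfl hfib, Finset.sum_const, smul_eq_mul, mul_comm]

lemma sg_mul (p q : Bool) :
    (if p then (1:ℝ) else -1) * (if q then 1 else -1) = sg (p == q) := by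
  cases p <;> cases q <;> simp [sg]

lemma autocorr_eq (n k : ℕ) (hk1 : 1 ≤ k) (hkn : k < n) (b : Fin n → Bool) :
    autocorr b k = Ssum (n - k) (phi n k b) := by
  rw [autocorr, Ssum, ← Fin.sum_univ_eq_sum_range]
  refine Finset.sum_congr rfl fun j _ => ?_
  have hj1 : (j : ℕ) < n := by have := j.2; omega
  have hj2 : (j : ℕ) + k < n := by have := j.2; omega
  rw [rad, dif_pos hj1, rad, dif_pos hj2, sg_mul]
  rfl

lemma psl_gt {n : ℕ} (b : Fin n → Bool) (t : ℝ) (ht : 0 ≤ t) (h : t < psl b) :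
    ∃ k ∈ Finset.Icc 1 (n - 1), t < |autocorr b k| := by
  by_contra hc
  push_neg at hc
  have : psl b ≤ t :=
    Real.iSup_le (fun k => Real.iSup_le (fun hk => hc k hk) ht) ht
  linarith

lemma geom_bound (n : ℕ) (hn : 2 ≤ n) (ψ : ℝ) (hψ : 0 < ψ) :
    ∑ k ∈ Finset.Icc 1 (n - 1), Real.exp (-((n : ℝ) * ψ) / ((n - k : ℕ) : ℝ))
      < (n : ℝ) * Real.exp (-ψ) / ψ := by
  have hN : (0:ℝ) < n := by positivity
  set q : ℝ := Real.exp (-(ψ / n)) with hq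
  have hq0 : 0 < q := Real.exp_pos _
  have hq1 : q < 1 := Real.exp_lt_one_iff.2 (neg_lt_zero.2 (by positivity))
  have h1q : 0 < 1 - q := by linarith
  have hterm : ∀ k ∈ Finset.Icc 1 (n - 1),
      Real.exp (-((n : ℝ) * ψ) / ((n - k : ℕ) : ℝ)) ≤ Real.exp (-ψ) * q ^ k := by
    intro k hk
    simp only [Finset.mem_Icc] at hk
    set M : ℝ := ((n - k : ℕ) : ℝ) with hM
    have hMval : M = (n : ℝ) - k := by
      rw [hM, Nat.cast_sub (by omega)]
    have hM1 : 1 ≤ M := by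
      rw [hM]; exact_mod_cast Nat.one_le_iff_ne_zero.2 (by omega)
    have hM0 : 0 < M := by linarith
    have hkM : (k : ℝ) = (n : ℝ) - M := by rw [hMval]; ring
    rw [← Real.exp_nat_mul, ← Real.exp_add]
    apply Real.exp_le_exp.2
    have hkey : -((n:ℝ)*ψ)*(n:ℝ) ≤ ((-ψ)*(n:ℝ) - ((n:ℝ)-M)*ψ)*M := by
      nlinarith [mul_nonneg hψ.le (sq_nonneg ((n:ℝ) - M))]
    have hrw : -ψ + (k:ℝ) * -(ψ/(n:ℝ)) = ((-ψ)*(n:ℝ) - ((n:ℝ)-M)*ψ)/(n:ℝ) := by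
      rw [hkM]; field_simp; ring
    rw [hrw, div_le_div_iff₀ hM0 hN]
    exact hkey
  have hsum : ∑ k ∈ Finset.Icc 1 (n - 1), Real.exp (-((n : ℝ) * ψ) / ((n - k : ℕ) : ℝ))
      ≤ Real.exp (-ψ) * ∑ k ∈ Finset.Icc 1 (n - 1), q ^ k := by
    rw [Finset.mul_sum]
    exact Finset.sum_le_sum hterm
  have hIcc : Finset.Icc 1 (n - 1) = Finset.Ico 1 n := by
    rw [← Finset.Ico_add_one_right_eq_Icc]
    congr 1
    omega
  have hgeom : ∑ k ∈ Finset.Icc 1 (n - 1), q ^ k = (q - q ^ n)/(1 - q) := by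
    rw [hIcc, geom_sum_Ico hq1.ne (by omega)]
    rw [pow_one]
    rw [div_eq_div_iff (by linarith) (by linarith)]
    ring
  have hlt1 : (q - q ^ n)/(1 - q) < q / (1 - q) := by
    gcongr
    · nlinarith [pow_pos hq0 n]
  have hlt2 : q / (1 - q) < (n : ℝ) / ψ := by
    rw [div_lt_div_iff₀ h1q hψ]
    have hE : ψ / (n:ℝ) + 1 < Real.exp (ψ / n) :=
      Real.add_one_lt_exp (ne_of_gt (by positivity))
    have hqE : q * Real.exp (ψ / n) = 1 := by
      rw [hq, ← Real.exp_add]; simp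
    have hNdiv : (n:ℝ) * (ψ / n) = ψ := by field_simp
    have h2 : ψ < (n:ℝ) * (Real.exp (ψ / n) - 1) := by
      have := mul_lt_mul_of_pos_left hE hN
      nlinarith
    have h3 := mul_lt_mul_of_pos_left h2 hq0
    have h4 : q * ((n:ℝ) * (Real.exp (ψ / n) - 1)) = (n:ℝ) * (1 - q) := by
      linear_combination (n:ℝ) * hqE
    linarith
  calc ∑ k ∈ Finset.Icc 1 (n - 1), Real.exp (-((n : ℝ) * ψ) / ((n - k : ℕ) : ℝ))
      ≤ Real.exp (-ψ) * ∑ k ∈ Finset.Icc 1 (n - 1), q ^ k := hsum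
    _ < Real.exp (-ψ) * ((n : ℝ) / ψ) := by
        apply mul_lt_mul_of_pos_left _ (Real.exp_pos _)
        rw [hgeom]
        exact hlt1.trans hlt2
    _ = (n : ℝ) * Real.exp (-ψ) / ψ := by ring

theorem stmt_9 (n : ℕ) (hn : 2 ≤ n) (ψ : ℝ) (hψ : 0 < ψ) :
    ((Finset.univ.filter fun b : Fin n → Bool =>
        Real.sqrt (2 * n * ψ) < psl b).card : ℝ) / 2 ^ n <
      2 * n / (ψ * Real.exp ψ) := by
  set t : ℝ := Real.sqrt (2 * n * ψ) with htdef
  have ht0 : 0 ≤ t := Real.sqrt_nonneg _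
  have ht2 : t ^ 2 = 2 * n * ψ := Real.sq_sqrt (by positivity)
  -- union bound
  have hsub : (Finset.univ.filter fun b : Fin n → Bool => t < psl b)
      ⊆ (Finset.Icc 1 (n - 1)).biUnion fun k =>
          Finset.univ.filter fun b : Fin n → Bool => t < |autocorr b k| := by
    intro b hb
    simp only [Finset.mem_filter, Finset.mem_univ, true_and] at hb
    obtain ⟨k, hk, hk2⟩ := psl_gt b t ht0 hb
    exact Finset.mem_biUnion.2 ⟨k, hk, Finset.mem_filter.2 ⟨Finset.mem_univ _, hk2⟩⟩
  have hcard1 : ((Finset.univ.filter fun b : Fin n → Bool => t < psl b).card : ℝ)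
      ≤ ∑ k ∈ Finset.Icc 1 (n - 1),
          ((Finset.univ.filter fun b : Fin n → Bool => t < |autocorr b k|).card : ℝ) := by
    have := (Finset.card_le_card hsub).trans (Finset.card_biUnion_le)
    exact_mod_cast this
  -- per-shift bound
  have hper : ∀ k ∈ Finset.Icc 1 (n - 1),
      ((Finset.univ.filter fun b : Fin n → Bool => t < |autocorr b k|).card : ℝ)
        ≤ 2 * 2 ^ n * Real.exp (-((n : ℝ) * ψ) / ((n - k : ℕ) : ℝ)) := by
    intro k hk
    simp only [Finset.mem_Icc] at hk
    have hk1 : 1 ≤ k := hk.1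
    have hkn : k < n := by omega
    have hmpos : 0 < n - k := by omega
    have hfilter : (Finset.univ.filter fun b : Fin n → Bool => t < |autocorr b k|)
        = Finset.univ.filter fun b : Fin n → Bool => t < |Ssum (n - k) (phi n k b)| := by
      apply Finset.filter_congr
      intro b _
      rw [autocorr_eq n k hk1 hkn b]
    rw [hfilter]
    have hcount := count_comp n k hk1 hkn (fun x => t < |Ssum (n - k) x|)
    rw [hcount]
    have hch := chernoff_abs (n - k) hmpos t ht0
    have hexp : -(t ^ 2) / (2 * ((n - k : ℕ) : ℝ)) = -((n : ℝ) * ψ) / ((n - k : ℕ) : ℝ) := by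
      rw [ht2]
      rw [show -(2 * (n:ℝ) * ψ) = 2 * -((n:ℝ) * ψ) by ring]
      rw [mul_div_mul_left _ _ (two_ne_zero)]
    rw [hexp] at hch
    have h2 : (2:ℝ) ^ k * (2 * 2 ^ (n - k) * Real.exp (-((n : ℝ) * ψ) / ((n - k : ℕ) : ℝ)))
        = 2 * 2 ^ n * Real.exp (-((n : ℝ) * ψ) / ((n - k : ℕ) : ℝ)) := by
      rw [show (2:ℝ) ^ n = 2 ^ k * 2 ^ (n - k) by rw [← pow_add]; congr 1; omega]
      ring
    calc ((2 ^ k * (Finset.univ.filter fun x : Fin (n - k) → Bool =>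
            t < |Ssum (n - k) x|).card : ℕ) : ℝ)
        = (2:ℝ) ^ k * ((Finset.univ.filter fun x : Fin (n - k) → Bool =>
            t < |Ssum (n - k) x|).card : ℝ) := by push_cast; ring
      _ ≤ (2:ℝ) ^ k * (2 * 2 ^ (n - k) * Real.exp (-((n : ℝ) * ψ) / ((n - k : ℕ) : ℝ))) := by
          apply mul_le_mul_of_nonneg_left hch (by positivity)
      _ = 2 * 2 ^ n * Real.exp (-((n : ℝ) * ψ) / ((n - k : ℕ) : ℝ)) := h2
  have hmain : ((Finset.univ.filter fun b : Fin n → Bool => t < psl b).card : ℝ)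
      < 2 * 2 ^ n * ((n : ℝ) * Real.exp (-ψ) / ψ) := by
    calc ((Finset.univ.filter fun b : Fin n → Bool => t < psl b).card : ℝ)
        ≤ ∑ k ∈ Finset.Icc 1 (n - 1),
            ((Finset.univ.filter fun b : Fin n → Bool => t < |autocorr b k|).card : ℝ) := hcard1
      _ ≤ ∑ k ∈ Finset.Icc 1 (n - 1),
            2 * 2 ^ n * Real.exp (-((n : ℝ) * ψ) / ((n - k : ℕ) : ℝ)) :=
          Finset.sum_le_sum hper
      _ = 2 * 2 ^ n * ∑ k ∈ Finset.Icc 1 (n - 1),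
            Real.exp (-((n : ℝ) * ψ) / ((n - k : ℕ) : ℝ)) := by rw [Finset.mul_sum]
      _ < 2 * 2 ^ n * ((n : ℝ) * Real.exp (-ψ) / ψ) := by
          apply mul_lt_mul_of_pos_left (geom_bound n hn ψ hψ) (by positivity)
  rw [div_lt_iff₀ (by positivity : (0:ℝ) < 2 ^ n)]
  have hrhs : 2 * (n:ℝ) / (ψ * Real.exp ψ) * 2 ^ n
      = 2 * 2 ^ n * ((n : ℝ) * Real.exp (-ψ) / ψ) := by
    rw [Real.exp_neg]
    field_simp
  rw [hrhs]
  exact hmain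
end

section
/- Fix ε > 0. For A uniform on binary ±1 sequences of length n with peak sidelobe level μ(A) = max_{1≤k≤n-1}|c_k|, the probability P[μ(A) > √(2n(log n - (1-ε) log log n))] tends to 0 as n → ∞. -/
open scoped Classical

lemma rad_update_ne {n : ℕ} (b : Fin n → Bool) (i : Fin n) (x : Bool) (m : ℕ) (hm : m ≠ i.val) :
    rad (Function.update b i x) m = rad b m := by
  unfold rad
  split
  · rename_i h
    rw [Function.update_of_ne]
    exact fun he => hm (by simpa using congrArg Fin.val he)
  · rfl

lemma rad_update_flip {n : ℕ} (b : Fin n → Bool) (i : Fin n) :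
    rad (Function.update b i (!(b i))) i.val = - rad b i.val := by
  unfold rad
  rw [dif_pos i.isLt, dif_pos i.isLt]
  have : (⟨i.val, i.isLt⟩ : Fin n) = i := Fin.eta i i.isLt
  rw [this, Function.update_self]
  cases b i <;> simp

lemma rad_sq {n : ℕ} (b : Fin n → Bool) (j : ℕ) (h : j < n) :
    rad b j = 1 ∨ rad b j = -1 := by
  unfold rad; rw [dif_pos h]; cases b ⟨j, h⟩ <;> simp

lemma sum_prod_rad_eq_zero {n k : ℕ} (hk : 1 ≤ k) (S : Finset ℕ)
    (hS : S ⊆ Finset.range (n - k)) (hne : S.Nonempty) :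
    ∑ b : Fin n → Bool, ∏ j ∈ S, (rad b j * rad b (j + k)) = 0 := by
  set j0 := S.min' hne with hj0def
  have hj0S : j0 ∈ S := S.min'_mem hne
  have hj0 : j0 < n := by
    have := hS hj0S
    have := Finset.mem_range.mp this
    omega
  set i0 : Fin n := ⟨j0, hj0⟩ with hi0
  set e : (Fin n → Bool) → (Fin n → Bool) := fun b => Function.update b i0 (!(b i0)) with he
  have hinv : Function.Involutive e := by
    intro b
    funext m
    by_cases hm : m = i0
    · subst hm; simp [he, Function.update_self]
    · simp [he, Function.update_of_ne hm]
  have key : ∀ b, (∏ j ∈ S, (rad (e b) j * rad (e b) (j + k)))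
      = - ∏ j ∈ S, (rad b j * rad b (j + k)) := by
    intro b
    rw [← Finset.mul_prod_erase S _ hj0S, ← Finset.mul_prod_erase S
      (fun j => rad b j * rad b (j + k)) hj0S]
    have h1 : rad (e b) j0 = - rad b j0 := rad_update_flip b i0
    have h2 : rad (e b) (j0 + k) = rad b (j0 + k) :=
      rad_update_ne b i0 _ _ (by simp [hi0]; omega)
    have h3 : ∀ j ∈ S.erase j0, rad (e b) j * rad (e b) (j + k)
        = rad b j * rad b (j + k) := by
      intro j hj
      have hjne : j ≠ j0 := Finset.ne_of_mem_erase hj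
      have hjge : j0 ≤ j := S.min'_le j (Finset.mem_of_mem_erase hj)
      rw [rad_update_ne b i0 _ _ (by simpa [hi0] using hjne),
        rad_update_ne b i0 _ _ (by simp [hi0]; omega)]
    rw [Finset.prod_congr rfl h3, h1, h2]
    ring
  have hsum : ∑ b : Fin n → Bool, ∏ j ∈ S, (rad b j * rad b (j + k))
      = ∑ b : Fin n → Bool, ∏ j ∈ S, (rad (e b) j * rad (e b) (j + k)) :=
    (Function.Bijective.sum_comp (hinv.bijective) _).symm
  have h2 : ∑ b : Fin n → Bool, ∏ j ∈ S, (rad (e b) j * rad (e b) (j + k))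
      = - ∑ b : Fin n → Bool, ∏ j ∈ S, (rad b j * rad b (j + k)) := by
    rw [← Finset.sum_neg_distrib]
    exact Finset.sum_congr rfl fun b _ => key b
  linarith [hsum, h2]

lemma card_fun_bool (n : ℕ) : (Fintype.card (Fin n → Bool) : ℝ) = 2 ^ n := by
  simp [Fintype.card_fun]

lemma mgf (n k : ℕ) (hk : 1 ≤ k) (t : ℝ) :
    ∑ b : Fin n → Bool, Real.exp (t * autocorr b k) = 2 ^ n * Real.cosh t ^ (n - k) := by
  have hterm : ∀ b : Fin n → Bool, Real.exp (t * autocorr b k)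
      = ∏ j ∈ Finset.range (n - k), (Real.sinh t * (rad b j * rad b (j + k)) + Real.cosh t) := by
    intro b
    rw [autocorr, Finset.mul_sum, Real.exp_sum]
    refine Finset.prod_congr rfl fun j hj => ?_
    have hj' := Finset.mem_range.mp hj
    have h1 : j < n := by omega
    have h2 : j + k < n := by omega
    rcases rad_sq b j h1 with h | h <;> rcases rad_sq b (j+k) h2 with h' | h' <;>
        rw [h, h'] <;>
      simp [Real.sinh_add_cosh, ← Real.cosh_sub_sinh, mul_comm] <;> ring_nf <;>
      rw [← Real.sinh_add_cosh] <;> ring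
  simp_rw [hterm, Finset.prod_add]
  rw [Finset.sum_comm]
  rw [Finset.sum_eq_single (∅ : Finset ℕ)]
  · simp only [Finset.prod_empty, one_mul, Finset.sdiff_empty, Finset.prod_const,
      Finset.card_range, Finset.sum_const, Finset.card_univ, nsmul_eq_mul]
    rw [card_fun_bool]
  · intro T hT hTne
    have hTsub : T ⊆ Finset.range (n - k) := Finset.mem_powerset.mp hT
    have hTne' : T.Nonempty := Finset.nonempty_of_ne_empty hTne
    have hb : ∀ b : Fin n → Bool,
        (∏ j ∈ T, Real.sinh t * (rad b j * rad b (j + k))) *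
          ∏ j ∈ Finset.range (n - k) \ T, Real.cosh t
        = (Real.sinh t ^ T.card * Real.cosh t ^ (Finset.range (n - k) \ T).card) *
          ∏ j ∈ T, (rad b j * rad b (j + k)) := by
      intro b
      rw [Finset.prod_mul_distrib, Finset.prod_const, Finset.prod_const]
      ring
    rw [Finset.sum_congr rfl fun b _ => hb b, ← Finset.mul_sum,
      sum_prod_rad_eq_zero hk T hTsub hTne', mul_zero]
  · intro h
    exact absurd (Finset.empty_mem_powerset _) h

lemma chernoff_count {n : ℕ} (c : (Fin n → Bool) → ℝ) (lam t : ℝ) (ht : 0 ≤ t) :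
    ((Finset.univ.filter fun b => lam < c b).card : ℝ) * Real.exp (t * lam)
      ≤ ∑ b : Fin n → Bool, Real.exp (t * c b) := by
  have h1 : ((Finset.univ.filter fun b => lam < c b).card : ℝ) * Real.exp (t * lam)
      = ∑ b ∈ Finset.univ.filter fun b => lam < c b, Real.exp (t * lam) := by
    rw [Finset.sum_const, nsmul_eq_mul]
  rw [h1]
  refine le_trans (Finset.sum_le_sum fun b hb => ?_)
    (Finset.sum_le_sum_of_subset_of_nonneg (Finset.filter_subset _ _)
      (fun b _ _ => (Real.exp_pos _).le))
  exact Real.exp_le_exp.mpr (mul_le_mul_of_nonneg_left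
    (Finset.mem_filter.mp hb).2.le ht)

lemma count_abs {n : ℕ} (k : ℕ) (hk : 1 ≤ k) (lam t : ℝ) (ht : 0 ≤ t) :
    ((Finset.univ.filter fun b : Fin n → Bool => lam < |autocorr b k|).card : ℝ)
      ≤ 2 * 2 ^ n * Real.cosh t ^ (n - k) * Real.exp (-(t * lam)) := by
  have hsub : (Finset.univ.filter fun b : Fin n → Bool => lam < |autocorr b k|)
      ⊆ (Finset.univ.filter fun b : Fin n → Bool => lam < autocorr b k)
        ∪ (Finset.univ.filter fun b : Fin n → Bool => lam < -autocorr b k) := by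
    intro b hb
    have := (Finset.mem_filter.mp hb).2
    rcases abs_cases (autocorr b k) with ⟨h, _⟩ | ⟨h, _⟩
    · exact Finset.mem_union_left _ (Finset.mem_filter.mpr ⟨Finset.mem_univ _, h ▸ this⟩)
    · exact Finset.mem_union_right _ (Finset.mem_filter.mpr ⟨Finset.mem_univ _, h ▸ this⟩)
  have hcard := (Finset.card_le_card hsub).trans (Finset.card_union_le _ _)
  have hpos : (0:ℝ) < Real.exp (t * lam) := Real.exp_pos _
  have b1 := chernoff_count (n := n) (fun b => autocorr b k) lam t ht
  have b2 := chernoff_count (n := n) (fun b => -autocorr b k) lam t ht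
  rw [mgf n k hk t] at b1
  have hm : ∀ b : Fin n → Bool, t * -autocorr b k = (-t) * autocorr b k := fun b => by ring
  simp_rw [hm] at b2
  rw [mgf n k hk (-t), Real.cosh_neg] at b2
  have h1 : ((Finset.univ.filter fun b : Fin n → Bool => lam < autocorr b k).card : ℝ)
      ≤ 2 ^ n * Real.cosh t ^ (n - k) * Real.exp (-(t * lam)) := by
    rw [Real.exp_neg, ← div_eq_mul_inv, le_div_iff₀ hpos]
    exact b1
  have h2 : ((Finset.univ.filter fun b : Fin n → Bool => lam < -autocorr b k).card : ℝ)
      ≤ 2 ^ n * Real.cosh t ^ (n - k) * Real.exp (-(t * lam)) := by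
    rw [Real.exp_neg, ← div_eq_mul_inv, le_div_iff₀ hpos]
    exact b2
  calc ((Finset.univ.filter fun b : Fin n → Bool => lam < |autocorr b k|).card : ℝ)
      ≤ ((Finset.univ.filter fun b : Fin n → Bool => lam < autocorr b k).card : ℝ)
        + ((Finset.univ.filter fun b : Fin n → Bool => lam < -autocorr b k).card : ℝ) := by
        exact_mod_cast hcard
    _ ≤ 2 * 2 ^ n * Real.cosh t ^ (n - k) * Real.exp (-(t * lam)) := by linarith

lemma count_abs2 {n : ℕ} (k : ℕ) (hk : 1 ≤ k) (hkn : k < n) (lam : ℝ) (hlam : 0 ≤ lam) :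
    ((Finset.univ.filter fun b : Fin n → Bool => lam < |autocorr b k|).card : ℝ)
      ≤ 2 * 2 ^ n * Real.exp (-(lam ^ 2 / (2 * ((n - k : ℕ) : ℝ)))) := by
  set m : ℕ := n - k with hm
  have hm1 : 1 ≤ m := by omega
  have hmpos : (0:ℝ) < (m:ℝ) := by exact_mod_cast hm1
  set t : ℝ := lam / m with htdef
  have ht : 0 ≤ t := div_nonneg hlam hmpos.le
  refine (count_abs k hk lam t ht).trans ?_
  have hcosh : Real.cosh t ^ m ≤ Real.exp (t ^ 2 / 2) ^ m :=
    pow_le_pow_left₀ (Real.cosh_pos t).le (Real.cosh_le_exp_half_sq t) m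
  have : Real.exp (t ^ 2 / 2) ^ m * Real.exp (-(t * lam))
      = Real.exp (-(lam ^ 2 / (2 * (m:ℝ)))) := by
    rw [← Real.exp_nat_mul, ← Real.exp_add]
    congr 1
    rw [htdef]
    field_simp
    ring
  calc 2 * 2 ^ n * Real.cosh t ^ m * Real.exp (-(t * lam))
      ≤ 2 * 2 ^ n * Real.exp (t ^ 2 / 2) ^ m * Real.exp (-(t * lam)) := by
        have h2 : (0:ℝ) ≤ 2 * 2 ^ n := by positivity
        exact mul_le_mul_of_nonneg_right (mul_le_mul_of_nonneg_left hcosh h2)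
          (Real.exp_pos _).le
    _ = 2 * 2 ^ n * Real.exp (-(lam ^ 2 / (2 * (m:ℝ)))) := by
        rw [mul_assoc, this]

lemma psl_le {n : ℕ} (b : Fin n → Bool) (lam : ℝ) (hlam : 0 ≤ lam)
    (h : ∀ k ∈ Finset.Icc 1 (n-1), |autocorr b k| ≤ lam) : psl b ≤ lam :=
  Real.iSup_le (fun k => Real.iSup_le (fun hk => h k hk) hlam) hlam

lemma main_count {n : ℕ} (lam : ℝ) (hlam : 0 ≤ lam) :
    ((Finset.univ.filter fun b : Fin n → Bool => lam < psl b).card : ℝ)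
      ≤ ∑ k ∈ Finset.Icc 1 (n-1),
          ((Finset.univ.filter fun b : Fin n → Bool => lam < |autocorr b k|).card : ℝ) := by
  have hsub : (Finset.univ.filter fun b : Fin n → Bool => lam < psl b)
      ⊆ (Finset.Icc 1 (n-1)).biUnion
          (fun k => Finset.univ.filter fun b : Fin n → Bool => lam < |autocorr b k|) := by
    intro b hb
    have hb' := (Finset.mem_filter.mp hb).2
    by_contra hc
    simp only [Finset.mem_biUnion, Finset.mem_filter, Finset.mem_univ, true_and,
      not_exists, not_and, not_lt] at hc
    exact absurd hb' (not_lt.mpr (psl_le b lam hlam hc))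
  have := (Finset.card_le_card hsub).trans (Finset.card_biUnion_le)
  exact_mod_cast this

lemma sum_exp_bound (n : ℕ) (hn : 1 ≤ n) (L : ℝ) (hL : 0 < L) (hLn : L ≤ n) :
    ∑ k ∈ Finset.Icc 1 (n-1), Real.exp (-((n:ℝ) * L / ((n - k : ℕ) : ℝ)))
      ≤ Real.exp (-L) * (2 * n / L) := by
  have hnpos : (0:ℝ) < n := by exact_mod_cast hn
  set r : ℝ := Real.exp (-(L / n)) with hr
  have hr0 : 0 < r := Real.exp_pos _
  have hr1 : r < 1 := by
    rw [hr, Real.exp_lt_one_iff]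
    have : 0 < L / n := div_pos hL hnpos
    linarith
  -- termwise bound
  have hterm : ∀ k ∈ Finset.Icc 1 (n-1),
      Real.exp (-((n:ℝ) * L / ((n - k : ℕ) : ℝ))) ≤ Real.exp (-L) * r ^ k := by
    intro k hk
    obtain ⟨hk1, hk2⟩ := Finset.mem_Icc.mp hk
    have hkn : k < n := by omega
    have hmcast : ((n - k : ℕ) : ℝ) = (n:ℝ) - k := by
      push_cast [Nat.cast_sub hkn.le]; ring
    have hmpos : (0:ℝ) < (n:ℝ) - (k:ℝ) := by
      have : (k:ℝ) < n := by exact_mod_cast hkn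
      linarith
    rw [← Real.exp_nat_mul, ← Real.exp_add, Real.exp_le_exp, hmcast]
    have hkR : (0:ℝ) ≤ k := by positivity
    have harith : L + (k:ℝ) * (L / n) ≤ (n:ℝ) * L / ((n:ℝ) - k) := by
      rw [le_div_iff₀ hmpos]
      have expand : (L + (k:ℝ) * (L / n)) * ((n:ℝ) - k) = (n:ℝ) * L - (k:ℝ)^2 * L / n
          + ((k:ℝ) * L - (k:ℝ) * L * ((n:ℝ)/n)) := by
        field_simp; ring
      have hnn : (n:ℝ)/n = 1 := div_self hnpos.ne'
      rw [expand, hnn]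
      have : (0:ℝ) ≤ (k:ℝ)^2 * L / n := by positivity
      nlinarith
    have heq : (k:ℝ) * -(L / n) = -((k:ℝ) * (L / n)) := by ring
    rw [heq]
    linarith
  have hsum1 : ∑ k ∈ Finset.Icc 1 (n-1), Real.exp (-((n:ℝ) * L / ((n - k : ℕ) : ℝ)))
      ≤ Real.exp (-L) * ∑ k ∈ Finset.Icc 1 (n-1), r ^ k := by
    rw [Finset.mul_sum]
    exact Finset.sum_le_sum hterm
  have hsub : Finset.Icc 1 (n-1) ⊆ Finset.range n := by
    intro k hk
    obtain ⟨hk1, hk2⟩ := Finset.mem_Icc.mp hk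
    exact Finset.mem_range.mpr (by omega)
  have hsum2 : ∑ k ∈ Finset.Icc 1 (n-1), r ^ k ≤ ∑ k ∈ Finset.range n, r ^ k :=
    Finset.sum_le_sum_of_subset_of_nonneg hsub fun k _ _ => (pow_pos hr0 k).le
  have hgeom : ∑ k ∈ Finset.range n, r ^ k ≤ 1 / (1 - r) := by
    have h1r : 0 < 1 - r := by linarith
    rw [le_div_iff₀ h1r]
    have := geom_sum_mul r n
    have hrn : (0:ℝ) ≤ r ^ n := (pow_pos hr0 n).le
    nlinarith [this]
  have hfrac : 1 / (1 - r) ≤ 2 * n / L := by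
    have hx : (0:ℝ) < 1 + L / n := by positivity
    have hx1 : L / n ≤ 1 := (div_le_one hnpos).mpr hLn
    have hx0 : 0 < L / n := div_pos hL hnpos
    have hrle : r ≤ (1 + L / n)⁻¹ := by
      rw [hr, Real.exp_neg]
      have hexp : 1 + L / n ≤ Real.exp (L / n) := by
        have := Real.add_one_le_exp (L / n); linarith
      exact inv_anti₀ hx hexp
    have h6 : (1 + L / n)⁻¹ ≤ 1 - L / n / 2 := by
      rw [inv_eq_one_div, div_le_iff₀ hx]
      nlinarith
    have hhalf : L / (2 * n) = L / n / 2 := by ring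
    have hkey : L / (2 * n) ≤ 1 - r := by
      rw [hhalf]; linarith
    have h1r : 0 < 1 - r := by linarith
    rw [div_le_div_iff₀ h1r hL]
    have h2n : (0:ℝ) < 2 * n := by positivity
    have := (div_le_iff₀ h2n).mp hkey
    linarith
  calc ∑ k ∈ Finset.Icc 1 (n-1), Real.exp (-((n:ℝ) * L / ((n - k : ℕ) : ℝ)))
      ≤ Real.exp (-L) * ∑ k ∈ Finset.Icc 1 (n-1), r ^ k := hsum1
    _ ≤ Real.exp (-L) * (1 / (1 - r)) := by
        refine mul_le_mul_of_nonneg_left (hsum2.trans hgeom) (Real.exp_pos _).le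
    _ ≤ Real.exp (-L) * (2 * n / L) :=
        mul_le_mul_of_nonneg_left hfrac (Real.exp_pos _).le

lemma final_bound (ε : ℝ) (n : ℕ) (hn3 : 3 ≤ n)
    (hlog1 : 1 ≤ Real.log n)
    (hC2 : |1 - ε| * Real.log (Real.log n) ≤ (1/2) * Real.log n)
    (hC3 : Real.log n ≤ (n:ℝ) / 2) :
    ((Finset.univ.filter fun b : Fin n → Bool =>
        Real.sqrt (2 * n * (Real.log n - (1 - ε) * Real.log (Real.log n))) < psl b).card : ℝ)
      / 2 ^ n ≤ 8 * Real.log n ^ (-ε) := by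
  have hn1 : 1 ≤ n := by omega
  have hnpos : (0:ℝ) < n := by exact_mod_cast (by omega : 0 < n)
  have hlogpos : (0:ℝ) < Real.log n := by linarith
  set ll := Real.log (Real.log n) with hlldef
  have hll0 : 0 ≤ ll := Real.log_nonneg hlog1
  set L : ℝ := Real.log n - (1 - ε) * ll with hLdef
  have habs1 : (1 - ε) * ll ≤ |1 - ε| * ll :=
    mul_le_mul_of_nonneg_right (le_abs_self _) hll0
  have habs2 : -((1 - ε) * ll) ≤ |1 - ε| * ll := by
    have h := neg_abs_le (1 - ε)
    nlinarith
  have hL1 : Real.log n / 2 ≤ L := by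
    rw [hLdef]; linarith
  have hL0 : 0 < L := by linarith
  have hLn : L ≤ (n:ℝ) := by
    have : L ≤ Real.log n + |1 - ε| * ll := by rw [hLdef]; linarith
    linarith
  set lam := Real.sqrt (2 * n * L) with hlamdef
  have hlam0 : 0 ≤ lam := Real.sqrt_nonneg _
  have hlamsq : lam ^ 2 = 2 * n * L := Real.sq_sqrt (by positivity)
  have h1 := main_count (n := n) lam hlam0
  have h2 : ∀ k ∈ Finset.Icc 1 (n-1),
      ((Finset.univ.filter fun b : Fin n → Bool => lam < |autocorr b k|).card : ℝ)
        ≤ 2 * 2 ^ n * Real.exp (-((n:ℝ) * L / ((n - k : ℕ) : ℝ))) := by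
    intro k hk
    obtain ⟨hk1, hk2⟩ := Finset.mem_Icc.mp hk
    have hkn : k < n := by omega
    refine (count_abs2 k hk1 hkn lam hlam0).trans_eq ?_
    congr 2
    rw [hlamsq, mul_assoc,
      mul_div_mul_left ((n:ℝ) * L) (((n - k : ℕ) : ℝ)) (two_ne_zero (α := ℝ))]
  have h3 : ((Finset.univ.filter fun b : Fin n → Bool => lam < psl b).card : ℝ)
      ≤ 2 ^ n * (2 * (Real.exp (-L) * (2 * n / L))) := by
    refine h1.trans ((Finset.sum_le_sum h2).trans ?_)
    rw [← Finset.mul_sum]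
    have hs := sum_exp_bound n hn1 L hL0 hLn
    calc 2 * 2 ^ n * ∑ k ∈ Finset.Icc 1 (n-1),
          Real.exp (-((n:ℝ) * L / ((n - k : ℕ) : ℝ)))
        ≤ 2 * 2 ^ n * (Real.exp (-L) * (2 * n / L)) := by
          refine mul_le_mul_of_nonneg_left hs (by positivity)
      _ = 2 ^ n * (2 * (Real.exp (-L) * (2 * n / L))) := by ring
  have hdiv : ((Finset.univ.filter fun b : Fin n → Bool => lam < psl b).card : ℝ) / 2 ^ n
      ≤ 2 * (Real.exp (-L) * (2 * n / L)) := by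
    rw [div_le_iff₀ (by positivity : (0:ℝ) < 2 ^ n)]
    calc ((Finset.univ.filter fun b : Fin n → Bool => lam < psl b).card : ℝ)
        ≤ 2 ^ n * (2 * (Real.exp (-L) * (2 * n / L))) := h3
      _ = 2 * (Real.exp (-L) * (2 * n / L)) * 2 ^ n := by ring
  have hexpL : Real.exp (-L) = Real.log n ^ (1 - ε) / n := by
    have : -L = (1 - ε) * ll - Real.log n := by rw [hLdef]; ring
    rw [this, Real.exp_sub, Real.exp_log hnpos]
    congr 1
    rw [Real.rpow_def_of_pos hlogpos, hlldef]
    ring_nf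
  have hfinal : 2 * (Real.exp (-L) * (2 * n / L)) ≤ 8 * Real.log n ^ (-ε) := by
    rw [hexpL]
    have hA0 : (0:ℝ) ≤ Real.log n ^ (1 - ε) := (Real.rpow_pos_of_pos hlogpos _).le
    have hrw : Real.log n ^ (-ε) = Real.log n ^ (1 - ε) / Real.log n := by
      have := Real.rpow_sub hlogpos (1 - ε) 1
      rw [Real.rpow_one] at this
      rw [← this]
      norm_num
    rw [hrw]
    have key : 2 * ((Real.log n ^ (1 - ε) / n) * (2 * n / L))
        = 4 * Real.log n ^ (1 - ε) / L := by
      field_simp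
      ring
    rw [key]
    have hrhs : 8 * (Real.log n ^ (1 - ε) / Real.log n)
        = 8 * Real.log n ^ (1 - ε) / Real.log n := by ring
    rw [hrhs, div_le_div_iff₀ hL0 hlogpos]
    nlinarith [mul_le_mul_of_nonneg_left hL1
      (show (0:ℝ) ≤ 8 * Real.log n ^ (1 - ε) by positivity)]
  exact hdiv.trans hfinal

theorem stmt_11 (ε : ℝ) (hε : 0 < ε) :
    Filter.Tendsto
      (fun n : ℕ =>
        ((Finset.univ.filter fun b : Fin n → Bool =>
            Real.sqrt (2 * n * (Real.log n - (1 - ε) * Real.log (Real.log n))) < psl b).card : ℝ)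
          / 2 ^ n)
      Filter.atTop (nhds 0) := by
  have hcast : Filter.Tendsto (fun n : ℕ => (n:ℝ)) Filter.atTop Filter.atTop :=
    tendsto_natCast_atTop_atTop
  have hlog : Filter.Tendsto (fun n : ℕ => Real.log n) Filter.atTop Filter.atTop :=
    Real.tendsto_log_atTop.comp hcast
  have hg : Filter.Tendsto (fun n : ℕ => 8 * Real.log n ^ (-ε)) Filter.atTop (nhds 0) := by
    have h2 := (tendsto_rpow_neg_atTop hε).comp hlog
    have := h2.const_mul (8:ℝ)
    simpa using this
  refine squeeze_zero' ?_ ?_ hg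
  · filter_upwards with n
    positivity
  · have hE1 : ∀ᶠ n : ℕ in Filter.atTop, 1 ≤ Real.log n := hlog.eventually_ge_atTop 1
    have hE3' : Filter.Tendsto (fun n : ℕ => Real.log n / n) Filter.atTop (nhds 0) :=
      (Real.isLittleO_log_id_atTop.tendsto_div_nhds_zero).comp hcast
    have hE3 : ∀ᶠ n : ℕ in Filter.atTop, Real.log n ≤ (n:ℝ) / 2 := by
      filter_upwards [hE3'.eventually (gt_mem_nhds (by norm_num : (0:ℝ) < 1/2)),
        Filter.eventually_ge_atTop 1] with n h hn
      have hnpos : (0:ℝ) < n := by exact_mod_cast hn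
      rw [div_lt_iff₀ hnpos] at h
      nlinarith
    have hE2' : Filter.Tendsto (fun n : ℕ => Real.log (Real.log n) / Real.log n)
        Filter.atTop (nhds 0) :=
      (Real.isLittleO_log_id_atTop.tendsto_div_nhds_zero).comp hlog
    set c : ℝ := |1 - ε| with hc
    have hc0 : 0 ≤ c := abs_nonneg _
    have hE2 : ∀ᶠ n : ℕ in Filter.atTop,
        |1 - ε| * Real.log (Real.log n) ≤ (1/2) * Real.log n := by
      filter_upwards [hE2'.eventually
        (gt_mem_nhds (show (0:ℝ) < 1/(2*(c+1)) by positivity)), hE1] with n h h1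
      have hlogpos : (0:ℝ) < Real.log n := by linarith
      rw [div_lt_iff₀ hlogpos] at h
      have hll0 : 0 ≤ Real.log (Real.log n) := Real.log_nonneg h1
      have step1 : c * Real.log (Real.log n) ≤ c * (1/(2*(c+1)) * Real.log n) :=
        mul_le_mul_of_nonneg_left h.le hc0
      have hcδ : c * (1/(2*(c+1))) ≤ 1/2 := by
        rw [mul_one_div, div_le_iff₀ (by positivity : (0:ℝ) < 2*(c+1))]
        linarith
      have step2 : c * (1/(2*(c+1)) * Real.log n) ≤ (1/2) * Real.log n := by
        rw [← mul_assoc]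
        exact mul_le_mul_of_nonneg_right hcδ hlogpos.le
      calc |1 - ε| * Real.log (Real.log n) = c * Real.log (Real.log n) := by rw [hc]
        _ ≤ (1/2) * Real.log n := step1.trans step2
    filter_upwards [hE1, hE2, hE3, Filter.eventually_ge_atTop 3] with n h1 h2 h3 h4
    exact final_bound ε n h4 h1 h2 h3
end

section
/- Fix ε > 0. For all sufficiently large n, the proportion of binary ±1 sequences A of length n with μ(A) > √(2n(log n - log log n + log 2 + ε)) is strictly less than 1; equivalently, there exists a sequence A ∈ {±1}^n with μ(A) ≤ √(2n(log n - log log n + log 2 + ε)). -/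
open scoped Classical

namespace PSL13
open Finset Real

noncomputable def sgn (c : Bool) : ℝ := if c then 1 else -1

noncomputable def rsum {m : ℕ} (x : Fin m → Bool) : ℝ := ∑ j, sgn (x j)

lemma sum_exp (m : ℕ) (t : ℝ) :
    ∑ x : Fin m → Bool, Real.exp (t * rsum x) = (Real.exp t + Real.exp (-t)) ^ m := by
  have h : ∀ x : Fin m → Bool, Real.exp (t * rsum x) = ∏ j : Fin m, Real.exp (t * sgn (x j)) := by
    intro x; rw [rsum, Finset.mul_sum, Real.exp_sum]
  simp_rw [h]
  rw [← Fintype.piFinset_univ]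
  rw [Finset.sum_prod_piFinset Finset.univ (fun (_ : Fin m) (c : Bool) => Real.exp (t * sgn c))]
  simp [sgn, mul_comm]

lemma chernoff_one (m : ℕ) (hm : 1 ≤ m) (T : ℝ) (hT : 0 ≤ T)
    (f : (Fin m → Bool) → ℝ)
    (hf : ∀ t : ℝ, ∑ x : Fin m → Bool, Real.exp (t * f x) = (Real.exp t + Real.exp (-t)) ^ m) :
    ((Finset.univ.filter fun x : Fin m → Bool => T ≤ f x).card : ℝ)
      ≤ 2 ^ m * Real.exp (-T ^ 2 / (2 * m)) := by
  set t : ℝ := T / m with ht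
  have hm0 : (0:ℝ) < m := by exact_mod_cast hm
  have htpos : 0 ≤ t := div_nonneg hT hm0.le
  have key : ((Finset.univ.filter fun x : Fin m → Bool => T ≤ f x).card : ℝ)
      ≤ Real.exp (-(t*T)) * (Real.exp t + Real.exp (-t)) ^ m := by
    rw [← hf t, Finset.mul_sum]
    calc ((Finset.univ.filter fun x : Fin m → Bool => T ≤ f x).card : ℝ)
        = ∑ x ∈ Finset.univ.filter fun x : Fin m → Bool => T ≤ f x, (1:ℝ) := by simp
      _ ≤ ∑ x ∈ Finset.univ.filter fun x : Fin m → Bool => T ≤ f x,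
            Real.exp (-(t*T)) * Real.exp (t * f x) := by
          apply Finset.sum_le_sum
          intro x hx
          rw [Finset.mem_filter] at hx
          rw [← Real.exp_add]
          have : (0:ℝ) ≤ -(t*T) + t * f x := by nlinarith [hx.2]
          calc (1:ℝ) = Real.exp 0 := by simp
            _ ≤ _ := Real.exp_le_exp.2 this
      _ ≤ _ := Finset.sum_le_sum_of_subset_of_nonneg (Finset.filter_subset _ _)
          (fun x _ _ => by positivity)
  refine key.trans ?_
  have hcosh : Real.exp t + Real.exp (-t) ≤ 2 * Real.exp (t ^ 2 / 2) := by
    have := Real.cosh_le_exp_half_sq t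
    rw [Real.cosh_eq] at this
    linarith
  have hpow : (Real.exp t + Real.exp (-t)) ^ m ≤ (2 * Real.exp (t ^ 2 / 2)) ^ m := by
    apply pow_le_pow_left₀ (by positivity) hcosh
  calc Real.exp (-(t*T)) * (Real.exp t + Real.exp (-t)) ^ m
      ≤ Real.exp (-(t*T)) * (2 * Real.exp (t ^ 2 / 2)) ^ m := by
        apply mul_le_mul_of_nonneg_left hpow (by positivity)
    _ = 2 ^ m * Real.exp (-T ^ 2 / (2 * m)) := by
        have hexp : -(t*T) + (m:ℝ)*(t^2/2) = -T^2/(2*m) := by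
          rw [ht]; field_simp; ring
        rw [mul_pow, ← Real.exp_nat_mul, mul_comm ((2:ℝ)^m), ← mul_assoc, ← Real.exp_add, hexp,
          mul_comm]
end PSL13

namespace PSL13
open Finset Real

lemma chernoff_abs (m : ℕ) (hm : 1 ≤ m) (T : ℝ) (hT : 0 ≤ T) :
    ((Finset.univ.filter fun x : Fin m → Bool => T < |rsum x|).card : ℝ)
      ≤ 2 * (2 ^ m * Real.exp (-T ^ 2 / (2 * m))) := by
  have hsub : (Finset.univ.filter fun x : Fin m → Bool => T < |rsum x|)
      ⊆ (Finset.univ.filter fun x : Fin m → Bool => T ≤ rsum x)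
        ∪ (Finset.univ.filter fun x : Fin m → Bool => T ≤ -rsum x) := by
    intro x hx
    rw [Finset.mem_filter] at hx
    rcases abs_cases (rsum x) with ⟨he, _⟩ | ⟨he, _⟩
    · exact Finset.mem_union_left _ (Finset.mem_filter.2 ⟨Finset.mem_univ _, by linarith [hx.2, he ▸ hx.2]⟩)
    · exact Finset.mem_union_right _ (Finset.mem_filter.2 ⟨Finset.mem_univ _, by rw [he] at hx; linarith [hx.2]⟩)
  have h1 := chernoff_one m hm T hT rsum (sum_exp m)
  have h2 := chernoff_one m hm T hT (fun x => -rsum x) (by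
    intro t
    have := sum_exp m (-t)
    simpa [neg_neg, add_comm, mul_comm, neg_mul, mul_neg] using this)
  calc ((Finset.univ.filter fun x : Fin m → Bool => T < |rsum x|).card : ℝ)
      ≤ (((Finset.univ.filter fun x : Fin m → Bool => T ≤ rsum x)
        ∪ (Finset.univ.filter fun x : Fin m → Bool => T ≤ -rsum x)).card : ℝ) := by
        exact_mod_cast Finset.card_le_card hsub
    _ ≤ (((Finset.univ.filter fun x : Fin m → Bool => T ≤ rsum x).card : ℝ)
        + ((Finset.univ.filter fun x : Fin m → Bool => T ≤ -rsum x).card : ℝ)) := by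
        exact_mod_cast Finset.card_union_le _ _
    _ ≤ _ := by rw [two_mul]; exact add_le_add h1 h2
end PSL13

namespace PSL13
open Finset Real

def phi {n : ℕ} (k : ℕ) (hk : k < n) (b : Fin n → Bool) : Fin (n - k) → Bool :=
  fun j => b ⟨j.1, by omega⟩ == b ⟨j.1 + k, by omega⟩

lemma sgn_beq (a c : Bool) : sgn (a == c) = sgn a * sgn c := by
  cases a <;> cases c <;> simp [sgn]

lemma autocorr_eq_rsum {n : ℕ} (k : ℕ) (hk : k < n) (b : Fin n → Bool) :
    autocorr b k = rsum (phi k hk b) := by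
  rw [autocorr, rsum]
  have h : ∀ j : Fin (n - k), sgn (phi k hk b j) = rad b j.1 * rad b (j.1 + k) := by
    intro j
    have h1 : j.1 < n := by omega
    have h2 : j.1 + k < n := by omega
    simp only [phi]
    rw [sgn_beq, rad, rad, dif_pos h1, dif_pos h2]
    simp [sgn]
  symm
  calc ∑ j : Fin (n - k), sgn (phi k hk b j)
      = ∑ j : Fin (n - k), rad b j.1 * rad b (j.1 + k) := Finset.sum_congr rfl (fun j _ => h j)
    _ = ∑ j ∈ Finset.range (n - k), rad b j * rad b (j + k) :=
        Fin.sum_univ_eq_sum_range (fun j => rad b j * rad b (j + k)) (n - k)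

lemma count_autocorr {n : ℕ} (k : ℕ) (hk1 : 1 ≤ k) (hk : k < n) (T : ℝ) :
    ((Finset.univ.filter fun b : Fin n → Bool => T < |autocorr b k|).card : ℝ)
      ≤ 2 ^ k * ((Finset.univ.filter fun x : Fin (n - k) → Bool => T < |rsum x|).card : ℝ) := by
  classical
  set s := Finset.univ.filter fun b : Fin n → Bool => T < |autocorr b k| with hs
  set t := (Finset.univ : Finset (Fin k → Bool)) ×ˢ
    (Finset.univ.filter fun x : Fin (n - k) → Bool => T < |rsum x|) with hts
  have hmaps : ∀ b ∈ s, ((fun i : Fin k => b ⟨i.1, by omega⟩), phi k hk b) ∈ t := by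
    intro b hb
    rw [hs, Finset.mem_filter] at hb
    rw [hts, Finset.mem_product, Finset.mem_filter]
    refine ⟨Finset.mem_univ _, Finset.mem_univ _, ?_⟩
    rw [← autocorr_eq_rsum k hk b]
    exact hb.2
  have hinj : ∀ b ∈ s, ∀ b' ∈ s,
      ((fun i : Fin k => b ⟨i.1, by omega⟩), phi k hk b)
        = ((fun i : Fin k => b' ⟨i.1, by omega⟩), phi k hk b') → b = b' := by
    intro b _ b' _ heq
    have h1 := congrArg Prod.fst heq
    have h2 := congrArg Prod.snd heq
    simp only at h1 h2
    have bcancel : ∀ a x y : Bool, ((a == x) = (a == y)) → x = y := by decide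
    have key : ∀ j, ∀ (h : j < n), b ⟨j, h⟩ = b' ⟨j, h⟩ := by
      intro j
      induction j using Nat.strong_induction_on with
      | _ j ih =>
        intro h
        by_cases hj : j < k
        · exact congrFun h1 ⟨j, hj⟩
        · have hj2 : j - k < n - k := by omega
          have hphi := congrFun h2 ⟨j - k, hj2⟩
          simp only [phi] at hphi
          have e : j - k + k = j := by omega
          simp only [e] at hphi
          have hb := ih (j - k) (by omega) (by omega)
          rw [hb] at hphi
          exact bcancel _ _ _ hphi
    funext i
    have := key i.1 i.2
    simpa using this
  have hle : s.card ≤ t.card := Finset.card_le_card_of_injOn _ hmaps hinj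
  have hcard : (t.card : ℝ)
      = 2 ^ k * ((Finset.univ.filter fun x : Fin (n - k) → Bool => T < |rsum x|).card : ℝ) := by
    rw [hts, Finset.card_product]
    push_cast
    congr 1
    rw [Finset.card_univ]
    simp
  calc (s.card : ℝ) ≤ (t.card : ℝ) := by exact_mod_cast hle
    _ = _ := hcard
end PSL13

namespace PSL13
open Finset Real

lemma psl_le {n : ℕ} (b : Fin n → Bool) (T : ℝ) (hT : 0 ≤ T)
    (h : ∀ k ∈ Finset.Icc 1 (n - 1), |autocorr b k| ≤ T) : psl b ≤ T := by
  rw [psl]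
  refine Real.iSup_le (fun k => Real.iSup_le (fun hk => h k hk) hT) hT

lemma count_psl {n : ℕ} (T : ℝ) (hT : 0 ≤ T) :
    ((Finset.univ.filter fun b : Fin n → Bool => T < psl b).card : ℝ)
      ≤ ∑ k ∈ Finset.Icc 1 (n - 1),
          ((Finset.univ.filter fun b : Fin n → Bool => T < |autocorr b k|).card : ℝ) := by
  have hsub : (Finset.univ.filter fun b : Fin n → Bool => T < psl b)
      ⊆ (Finset.Icc 1 (n - 1)).biUnion
          (fun k => Finset.univ.filter fun b : Fin n → Bool => T < |autocorr b k|) := by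
    intro b hb
    rw [Finset.mem_filter] at hb
    by_contra hcon
    rw [Finset.mem_biUnion] at hcon
    push_neg at hcon
    have hall : ∀ k ∈ Finset.Icc 1 (n - 1), |autocorr b k| ≤ T := by
      intro k hk
      by_contra hlt
      exact hcon k hk (Finset.mem_filter.2 ⟨Finset.mem_univ _, lt_of_not_ge hlt⟩)
    exact absurd (psl_le b T hT hall) (not_le.2 hb.2)
  calc ((Finset.univ.filter fun b : Fin n → Bool => T < psl b).card : ℝ)
      ≤ (((Finset.Icc 1 (n - 1)).biUnion
          (fun k => Finset.univ.filter fun b : Fin n → Bool => T < |autocorr b k|)).card : ℝ) := by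
        exact_mod_cast Finset.card_le_card hsub
    _ ≤ _ := by exact_mod_cast Finset.card_biUnion_le

lemma main_bound {n : ℕ} (hn : 2 ≤ n) (T : ℝ) (hT : 0 ≤ T) :
    ((Finset.univ.filter fun b : Fin n → Bool => T < psl b).card : ℝ)
      ≤ ∑ k ∈ Finset.Icc 1 (n - 1),
          (2:ℝ) ^ (n + 1) * Real.exp (-T ^ 2 / (2 * ((n - k : ℕ) : ℝ))) := by
  refine (count_psl T hT).trans (Finset.sum_le_sum ?_)
  intro k hk
  rw [Finset.mem_Icc] at hk
  have hk1 : 1 ≤ k := hk.1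
  have hkn : k < n := by omega
  have hm : 1 ≤ n - k := by omega
  calc ((Finset.univ.filter fun b : Fin n → Bool => T < |autocorr b k|).card : ℝ)
      ≤ 2 ^ k * ((Finset.univ.filter fun x : Fin (n - k) → Bool => T < |rsum x|).card : ℝ) :=
        count_autocorr k hk1 hkn T
    _ ≤ 2 ^ k * (2 * (2 ^ (n - k) * Real.exp (-T ^ 2 / (2 * ((n - k : ℕ) : ℝ))))) := by
        apply mul_le_mul_of_nonneg_left (chernoff_abs (n - k) hm T hT) (by positivity)
    _ = (2:ℝ) ^ (n + 1) * Real.exp (-T ^ 2 / (2 * ((n - k : ℕ) : ℝ))) := by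
        rw [show (2:ℝ)^(n+1) = 2^k * 2^(n-k) * 2 by
          rw [← pow_add]; rw [show k + (n - k) = n by omega]; ring]
        ring

end PSL13

namespace PSL13
open Finset Real

lemma sum_bound {n : ℕ} (hn : 3 ≤ n) (L : ℝ) (hL : 1 ≤ L)
    (hB : 2 * Real.exp (-L) * (((n : ℝ) + L) / L) < 1) :
    ∑ k ∈ Finset.Icc 1 (n - 1),
        (2:ℝ) ^ (n + 1) * Real.exp (-(2 * (n:ℝ) * L) / (2 * ((n - k : ℕ) : ℝ))) < 2 ^ n := by
  have hn0 : (0:ℝ) < n := by positivity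
  have hL0 : (0:ℝ) < L := by linarith
  set r : ℝ := Real.exp (-(L / n)) with hr
  have hr0 : 0 < r := Real.exp_pos _
  have hr1 : r < 1 := by
    rw [hr, Real.exp_lt_one_iff]
    have : 0 < L / n := by positivity
    linarith
  -- termwise bound
  have hterm : ∀ k ∈ Finset.Icc 1 (n - 1),
      Real.exp (-(2 * (n:ℝ) * L) / (2 * ((n - k : ℕ) : ℝ))) ≤ Real.exp (-L) * r ^ k := by
    intro k hk
    rw [Finset.mem_Icc] at hk
    have hk1 : 1 ≤ k := hk.1
    have hkn : k < n := by omega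
    have hmcast : ((n - k : ℕ) : ℝ) = (n : ℝ) - (k : ℝ) := by
      push_cast [Nat.cast_sub hkn.le]; ring
    have hkr : (1:ℝ) ≤ (k:ℝ) := by exact_mod_cast hk1
    have hknr : (k:ℝ) < (n:ℝ) := by exact_mod_cast hkn
    have hm0 : (0:ℝ) < (n:ℝ) - (k:ℝ) := by linarith
    rw [hr, ← Real.exp_nat_mul, ← Real.exp_add]
    apply Real.exp_le_exp.2
    rw [hmcast]
    have e1 : -(2 * (n:ℝ) * L) / (2 * ((n:ℝ) - (k:ℝ))) = -((n:ℝ) * L / ((n:ℝ) - (k:ℝ))) := by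
      rw [neg_div]
      congr 1
      rw [show (2 * (n:ℝ) * L) = 2 * ((n:ℝ) * L) by ring,
        mul_div_mul_left _ _ (two_ne_zero)]
    have e2 : -L + (k:ℝ) * -(L / (n:ℝ)) = -(L * ((n:ℝ) + (k:ℝ)) / (n:ℝ)) := by
      field_simp
      ring
    rw [e1, e2, neg_le_neg_iff, div_le_div_iff₀ hn0 hm0]
    nlinarith [sq_nonneg (k:ℝ), hL0.le]
  have hsum1 : ∑ k ∈ Finset.Icc 1 (n - 1),
      (2:ℝ) ^ (n + 1) * Real.exp (-(2 * (n:ℝ) * L) / (2 * ((n - k : ℕ) : ℝ)))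
      ≤ (2:ℝ) ^ (n + 1) * Real.exp (-L) * ∑ k ∈ Finset.Icc 1 (n - 1), r ^ k := by
    rw [Finset.mul_sum]
    apply Finset.sum_le_sum
    intro k hk
    calc (2:ℝ) ^ (n + 1) * Real.exp (-(2 * (n:ℝ) * L) / (2 * ((n - k : ℕ) : ℝ)))
        ≤ (2:ℝ) ^ (n + 1) * (Real.exp (-L) * r ^ k) :=
          mul_le_mul_of_nonneg_left (hterm k hk) (by positivity)
      _ = (2:ℝ) ^ (n + 1) * Real.exp (-L) * r ^ k := by ring
  -- geometric sum bound
  have hgeom : ∑ k ∈ Finset.Icc 1 (n - 1), r ^ k ≤ r / (1 - r) := by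
    have hIcc : Finset.Icc 1 (n - 1) = Finset.Ico 1 n := by
      rw [← Finset.Ico_add_one_right_eq_Icc]
      congr 1
      omega
    rw [hIcc, geom_sum_Ico hr1.ne (by omega : 1 ≤ n)]
    have e : (r ^ n - r ^ 1) / (r - 1) = (r - r ^ n) / (1 - r) := by
      rw [div_eq_div_iff (by linarith : r - 1 ≠ 0) (by linarith : 1 - r ≠ 0)]
      ring
    rw [e, div_le_div_iff₀ (by linarith) (by linarith)]
    have hrn : 0 ≤ r ^ n := by positivity
    nlinarith
  -- 1 - r ≥ L / (n + L)
  have hnL : (0:ℝ) < (n:ℝ) + L := by linarith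
  have hone : L / ((n:ℝ) + L) ≤ 1 - r := by
    have h1 : ((n:ℝ) + L) / n ≤ Real.exp (L / n) := by
      have h2 := Real.add_one_le_exp (L / (n:ℝ))
      have e : ((n:ℝ) + L) / n = L / n + 1 := by
        field_simp
        ring
      rw [e]
      linarith
    have hrle : r ≤ (n:ℝ) / ((n:ℝ) + L) := by
      rw [hr, Real.exp_neg]
      have e : (n:ℝ) / ((n:ℝ) + L) = (((n:ℝ) + L) / n)⁻¹ := by
        rw [inv_div]
      rw [e]
      exact inv_anti₀ (by positivity) h1
    have e2 : 1 - (n:ℝ) / ((n:ℝ) + L) = L / ((n:ℝ) + L) := by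
      field_simp
      ring
    linarith [hrle, e2 ▸ sub_le_sub_left hrle 1]
  have hfrac : r / (1 - r) ≤ ((n:ℝ) + L) / L := by
    have h1r : (0:ℝ) < 1 - r := by
      have hpos : (0:ℝ) < L / ((n:ℝ) + L) := by positivity
      linarith
    calc r / (1 - r) ≤ 1 / (1 - r) := (div_le_div_iff_of_pos_right h1r).2 hr1.le
      _ ≤ 1 / (L / ((n:ℝ) + L)) := by
          apply one_div_le_one_div_of_le (by positivity) hone
      _ = ((n:ℝ) + L) / L := by
          rw [one_div_div]
  calc ∑ k ∈ Finset.Icc 1 (n - 1),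
        (2:ℝ) ^ (n + 1) * Real.exp (-(2 * (n:ℝ) * L) / (2 * ((n - k : ℕ) : ℝ)))
      ≤ (2:ℝ) ^ (n + 1) * Real.exp (-L) * ∑ k ∈ Finset.Icc 1 (n - 1), r ^ k := hsum1
    _ ≤ (2:ℝ) ^ (n + 1) * Real.exp (-L) * (r / (1 - r)) :=
        mul_le_mul_of_nonneg_left hgeom (by positivity)
    _ ≤ (2:ℝ) ^ (n + 1) * Real.exp (-L) * (((n:ℝ) + L) / L) :=
        mul_le_mul_of_nonneg_left hfrac (by positivity)
    _ = (2:ℝ) ^ n * (2 * Real.exp (-L) * (((n:ℝ) + L) / L)) := by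
        rw [pow_succ]; ring
    _ < (2:ℝ) ^ n * 1 := by
        exact mul_lt_mul_of_pos_left hB (by positivity)
    _ = 2 ^ n := mul_one _
end PSL13

namespace PSL13
open Finset Real Filter

lemma eventually_lemma (ε : ℝ) (hε : 0 < ε) :
    ∀ᶠ x : ℝ in Filter.atTop,
      2 * Real.exp (-(Real.log x - Real.log (Real.log x) + Real.log 2 + ε))
        * ((x + (Real.log x - Real.log (Real.log x) + Real.log 2 + ε))
          / (Real.log x - Real.log (Real.log x) + Real.log 2 + ε)) < 1 := by
  set ℓ : ℝ → ℝ := fun x => Real.log x - Real.log (Real.log x) + Real.log 2 + ε with hℓ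
  have hA : Tendsto (fun x : ℝ => Real.log (Real.log x) / Real.log x) atTop (nhds 0) :=
    (Real.isLittleO_log_id_atTop.tendsto_div_nhds_zero).comp Real.tendsto_log_atTop
  have hlog1 : ∀ᶠ x : ℝ in atTop, 1 ≤ Real.log x :=
    Real.tendsto_log_atTop.eventually_ge_atTop 1
  have hx1 : ∀ᶠ x : ℝ in atTop, (1:ℝ) ≤ x := eventually_ge_atTop 1
  have hconst : Tendsto (fun x : ℝ => (Real.log 2 + ε) / Real.log x) atTop (nhds 0) :=
    Tendsto.div_atTop tendsto_const_nhds Real.tendsto_log_atTop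
  -- D : log x / ℓ x → 1
  have hD : Tendsto (fun x : ℝ => Real.log x / ℓ x) atTop (nhds 1) := by
    have hg : Tendsto (fun x : ℝ =>
        1 - Real.log (Real.log x) / Real.log x + (Real.log 2 + ε) / Real.log x)
        atTop (nhds 1) := by
      have := (tendsto_const_nhds (x := (1:ℝ)) (f := atTop)).sub hA |>.add hconst
      simpa using this
    have hinv := hg.inv₀ one_ne_zero
    rw [show ((1:ℝ)⁻¹) = 1 from inv_one] at hinv
    apply hinv.congr'
    filter_upwards [hlog1] with x hx
    have hlx : Real.log x ≠ 0 := by linarith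
    have e : 1 - Real.log (Real.log x) / Real.log x + (Real.log 2 + ε) / Real.log x
        = ℓ x / Real.log x := by
      rw [hℓ]; field_simp; ring
    rw [e, inv_div]
  -- E : ℓ x / x → 0
  have hlogdiv : Tendsto (fun x : ℝ => Real.log x / x) atTop (nhds 0) :=
    Real.isLittleO_log_id_atTop.tendsto_div_nhds_zero
  have hE : Tendsto (fun x : ℝ => ℓ x / x) atTop (nhds 0) := by
    have h2 : Tendsto (fun x : ℝ => Real.log (Real.log x) / x) atTop (nhds 0) := by
      apply squeeze_zero' (t₀ := atTop)
        (g := fun x : ℝ => Real.log x / x)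
      · filter_upwards [hlog1, hx1] with x hlx hx
        have : 0 ≤ Real.log (Real.log x) := Real.log_nonneg hlx
        positivity
      · filter_upwards [hlog1, hx1] with x hlx hx
        refine div_le_div_of_nonneg_right ?_ (by linarith)
        exact Real.log_le_self (by linarith)
      · exact hlogdiv
    have h3 : Tendsto (fun x : ℝ => (Real.log 2 + ε) / x) atTop (nhds 0) :=
      Tendsto.div_atTop tendsto_const_nhds tendsto_id
    have hcomb := (hlogdiv.sub h2).add h3
    rw [show (0:ℝ) - 0 + 0 = 0 by ring] at hcomb
    apply hcomb.congr'
    filter_upwards [hx1] with x hx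
    have hx0 : x ≠ 0 := by linarith
    rw [hℓ]
    field_simp
    ring
  -- F : (x + ℓ x)/x → 1
  have hF : Tendsto (fun x : ℝ => (x + ℓ x) / x) atTop (nhds 1) := by
    have := (tendsto_const_nhds (x := (1:ℝ)) (f := atTop)).add hE
    rw [show (1:ℝ) + 0 = 1 by ring] at this
    apply this.congr'
    filter_upwards [hx1] with x hx
    have hx0 : x ≠ 0 := by linarith
    field_simp
  -- G
  have hG : Tendsto (fun x : ℝ => Real.exp (-ε) * (Real.log x / ℓ x * ((x + ℓ x) / x)))
      atTop (nhds (Real.exp (-ε) * (1 * 1))) :=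
    tendsto_const_nhds.mul (hD.mul hF)
  have hlt : Real.exp (-ε) * (1 * 1) < 1 := by
    rw [mul_one, mul_one, Real.exp_lt_one_iff]
    linarith
  have hev2 := hG.eventually_lt_const hlt
  -- eventual equality
  filter_upwards [hev2, hlog1, hx1] with x hx2 hlx hx
  have hx0 : (0:ℝ) < x := by linarith
  have hlx0 : (0:ℝ) < Real.log x := by linarith
  have hℓ1 : (0:ℝ) < ℓ x := by
    have := Real.log_le_sub_one_of_pos hlx0
    rw [hℓ]
    have h2 : (0:ℝ) < Real.log 2 := Real.log_pos (by norm_num)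
    dsimp only
    linarith
  have hexp : Real.exp (-(ℓ x)) = Real.log x * x⁻¹ * 2⁻¹ * Real.exp (-ε) := by
    rw [hℓ]
    dsimp only
    rw [show -(Real.log x - Real.log (Real.log x) + Real.log 2 + ε)
      = Real.log (Real.log x) + (-(Real.log x)) + (-(Real.log 2)) + (-ε) by ring]
    rw [Real.exp_add, Real.exp_add, Real.exp_add, Real.exp_log hlx0, Real.exp_neg,
      Real.exp_neg (Real.log 2), Real.exp_log hx0, Real.exp_log (by norm_num : (0:ℝ) < 2)]
  calc 2 * Real.exp (-(ℓ x)) * ((x + ℓ x) / ℓ x)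
      = Real.exp (-ε) * (Real.log x / ℓ x * ((x + ℓ x) / x)) := by
        rw [hexp]
        field_simp
    _ < 1 := hx2

end PSL13

theorem stmt_13 (ε : ℝ) (hε : 0 < ε) :
    ∃ N : ℕ, ∀ n ≥ N,
      (((Finset.univ.filter fun b : Fin n → Bool =>
          Real.sqrt (2 * n * (Real.log n - Real.log (Real.log n) + Real.log 2 + ε))
            < psl b).card : ℝ) / 2 ^ n < 1) ∧
      ∃ b : Fin n → Bool,
        psl b ≤ Real.sqrt (2 * n * (Real.log n - Real.log (Real.log n) + Real.log 2 + ε)) := by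
  have hevN : ∀ᶠ n : ℕ in Filter.atTop,
      2 * Real.exp (-(Real.log n - Real.log (Real.log n) + Real.log 2 + ε))
        * (((n : ℝ) + (Real.log n - Real.log (Real.log n) + Real.log 2 + ε))
          / (Real.log n - Real.log (Real.log n) + Real.log 2 + ε)) < 1 :=
    tendsto_natCast_atTop_atTop.eventually (PSL13.eventually_lemma ε hε)
  obtain ⟨N₀, hN₀⟩ := Filter.eventually_atTop.1 hevN
  refine ⟨max N₀ 3, fun n hn => ?_⟩
  have hn3 : 3 ≤ n := le_trans (le_max_right _ _) hn
  have hB := hN₀ n (le_trans (le_max_left _ _) hn)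
  set L : ℝ := Real.log n - Real.log (Real.log n) + Real.log 2 + ε with hLdef
  have hnr : (3:ℝ) ≤ (n:ℝ) := by exact_mod_cast hn3
  have hL1 : 1 ≤ L := by
    have hlx0 : (0:ℝ) < Real.log n := Real.log_pos (by linarith)
    have h1 := Real.log_le_sub_one_of_pos hlx0
    have h2 : (0:ℝ) < Real.log 2 := Real.log_pos (by norm_num)
    rw [hLdef]
    linarith
  have hprod : (0:ℝ) ≤ 2 * (n:ℝ) * L := by positivity
  set T : ℝ := Real.sqrt (2 * (n:ℝ) * L) with hTdef
  have hT : 0 ≤ T := Real.sqrt_nonneg _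
  have hT2 : T ^ 2 = 2 * (n:ℝ) * L := Real.sq_sqrt hprod
  have hcard := PSL13.main_bound (n := n) (by omega) T hT
  simp only [hT2] at hcard
  have hsum := PSL13.sum_bound hn3 L hL1 hB
  have hlt : ((Finset.univ.filter fun b : Fin n → Bool => T < psl b).card : ℝ) < 2 ^ n :=
    lt_of_le_of_lt hcard hsum
  constructor
  · rw [div_lt_one (by positivity)]
    exact hlt
  · by_contra hcon
    push_neg at hcon
    have heq : (Finset.univ.filter fun b : Fin n → Bool => T < psl b) = Finset.univ :=
      Finset.filter_true_of_mem (fun b _ => hcon b)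
    rw [heq, Finset.card_univ] at hlt
    have : (Fintype.card (Fin n → Bool) : ℝ) = 2 ^ n := by
      rw [Fintype.card_fun]
      simp
    rw [this] at hlt
    exact lt_irrefl _ hlt
end

section
/- For every integer n > 1, with ψ(n) = log n - log log n + 0.862, we have ψ(n)·e^{ψ(n)} ≥ (e^{0.862} - 1/e)·n > 2.00001·n, and hence 2n/(ψ(n)·e^{ψ(n)}) < 1. -/
theorem stmt_14 (n : ℕ) (hn : 1 < n) :
    ((Real.log n - Real.log (Real.log n) + 0.862) *
        Real.exp (Real.log n - Real.log (Real.log n) + 0.862) ≥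
      (Real.exp 0.862 - 1 / Real.exp 1) * n) ∧
    (Real.exp 0.862 - 1 / Real.exp 1) * n > 2.00001 * n ∧
    2 * n / ((Real.log n - Real.log (Real.log n) + 0.862) *
        Real.exp (Real.log n - Real.log (Real.log n) + 0.862)) < 1 := by
  have hn1 : (1:ℝ) < n := by exact_mod_cast hn
  have hn0 : (0:ℝ) < n := by linarith
  have hL : 0 < Real.log n := Real.log_pos hn1
  set L := Real.log n with hLdef
  set E := Real.exp 0.862 with hEdef
  have hEpos : 0 < E := Real.exp_pos _
  have hexp : Real.exp (L - Real.log L + 0.862) = n / L * E := by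
    rw [Real.exp_add, Real.exp_sub, Real.exp_log hn0, Real.exp_log hL, hEdef]
  -- key: log L ≤ 0.862 + L * exp(-1.862)
  have key : Real.log L ≤ 0.862 + L * Real.exp (-1.862) := by
    have h := Real.log_le_sub_one_of_pos
      (x := L * Real.exp (-1.862)) (by positivity)
    rw [Real.log_mul hL.ne' (Real.exp_ne_zero _), Real.log_exp] at h
    linarith
  have hEe : E * Real.exp (-1.862) = 1 / Real.exp 1 := by
    rw [hEdef, ← Real.exp_add, one_div, ← Real.exp_neg]
    norm_num
  have A : (E - 1 / Real.exp 1) * L ≤ (L - Real.log L + 0.862) * E := by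
    have h2 : (Real.log L - 0.862) * E ≤ (L * Real.exp (-1.862)) * E := by
      apply mul_le_mul_of_nonneg_right _ hEpos.le
      linarith
    nlinarith [hEe]
  have part1 : (L - Real.log L + 0.862) * Real.exp (L - Real.log L + 0.862) ≥
      (E - 1 / Real.exp 1) * n := by
    rw [hexp]
    have h3 : (E - 1 / Real.exp 1) * n = ((E - 1 / Real.exp 1) * L) * (n / L) := by
      field_simp
    rw [h3]
    calc ((E - 1 / Real.exp 1) * L) * (n / L)
        ≤ ((L - Real.log L + 0.862) * E) * (n / L) := by
          apply mul_le_mul_of_nonneg_right A (by positivity)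
      _ = (L - Real.log L + 0.862) * (n / L * E) := by ring
  have hEbig : E > 2.00001 + 1 / Real.exp 1 := by
    have h1 : (2.3678909 : ℝ) ≤ E := by
      have := Real.sum_le_exp_of_nonneg (x := (0.862:ℝ)) (by norm_num) 9
      rw [← hEdef] at this
      refine le_trans ?_ this
      simp [Finset.sum_range_succ, Nat.factorial]
      norm_num
    have h2 : 1 / Real.exp 1 < 0.3678795 := by
      rw [div_lt_iff₀ (Real.exp_pos 1)]
      nlinarith [Real.exp_one_gt_d9]
    linarith
  have part2 : (E - 1 / Real.exp 1) * n > 2.00001 * n := by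
    apply mul_lt_mul_of_pos_right _ hn0
    linarith
  refine ⟨part1, part2, ?_⟩
  have h2n : 2 * (n:ℝ) < (L - Real.log L + 0.862) * Real.exp (L - Real.log L + 0.862) := by
    have : (2.00001:ℝ) * n ≥ 2 * n := by nlinarith
    linarith
  rw [div_lt_one (lt_trans (by positivity) h2n)]
  exact h2n
end

section
/- For every integer n > 1 there exists a binary ±1 sequence A of length n with peak sidelobe level μ(A) ≤ √(2n(log n - log log n + 0.862)); i.e., μ_min(n) ≤ √(2n(log n - log log n + 0.862)). -/
open scoped Classical

namespace PSLAux


/-- Lower bound for exp via (1+x/128)^128. -/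
lemma num_le_exp {x c : ℝ} (hx : 0 ≤ x) (h : c ≤ (1 + x/128)^(128:ℕ)) : c ≤ Real.exp x := by
  refine h.trans ?_
  have h1 : (1 + x/128 : ℝ) ≤ Real.exp (x/128) := by
    simpa [add_comm] using Real.add_one_le_exp (x/128)
  calc (1 + x/128 : ℝ)^(128:ℕ) ≤ (Real.exp (x/128))^(128:ℕ) := by
        exact pow_le_pow_left₀ (by positivity) h1 _
    _ = Real.exp x := by
        rw [← Real.exp_nat_mul]; congr 1; push_cast; ring

/-- Upper bound for exp via (1-x/128)^(-128). -/
lemma exp_le_num {x c : ℝ} (hx : 0 ≤ x) (hx1 : x < 128) (hc : 0 ≤ c)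
    (h : 1 ≤ c * (1 - x/128)^(128:ℕ)) : Real.exp x ≤ c := by
  have hp : (0:ℝ) < 1 - x/128 := by linarith
  have h1 : (1 - x/128 : ℝ) ≤ Real.exp (-(x/128)) := by
    simpa [add_comm] using Real.add_one_le_exp (-(x/128))
  have key : Real.exp x * (1 - x/128)^(128:ℕ) ≤ 1 := by
    have : Real.exp x * (1 - x/128)^(128:ℕ) = (Real.exp (x/128) * (1 - x/128))^(128:ℕ) := by
      rw [mul_pow, ← Real.exp_nat_mul]; congr 2; push_cast; ring
    rw [this]
    have hb : Real.exp (x/128) * (1 - x/128) ≤ 1 := by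
      calc Real.exp (x/128) * (1 - x/128) ≤ Real.exp (x/128) * Real.exp (-(x/128)) :=
            mul_le_mul_of_nonneg_left h1 (Real.exp_pos _).le
        _ = 1 := by rw [← Real.exp_add]; simp
    calc (Real.exp (x/128) * (1 - x/128))^(128:ℕ) ≤ 1^(128:ℕ) :=
          pow_le_pow_left₀ (by positivity) hb _
      _ = 1 := one_pow _
  have hpp : (0:ℝ) < (1 - x/128)^(128:ℕ) := pow_pos hp _
  have := key.trans h
  exact le_of_mul_le_mul_right this hpp

/-- `exp (s - m) ≤ c` from rational arithmetic. -/
lemma exp_neg_le_num {s c : ℝ} (m : ℕ) (hs : 0 ≤ s) (hs1 : s < 128) (hc : 0 ≤ c)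
    (h : 1 ≤ (c * 2.7182818283^m) * (1 - s/128)^(128:ℕ)) : Real.exp (s - m) ≤ c := by
  have h1 : Real.exp s ≤ c * 2.7182818283^m :=
    exp_le_num hs hs1 (by positivity) h
  have hm : (2.7182818283:ℝ)^m ≤ (Real.exp 1)^m :=
    pow_le_pow_left₀ (by norm_num) Real.exp_one_gt_d9.le m
  have hem : (Real.exp 1)^m = Real.exp m := by rw [← Real.exp_nat_mul, mul_one]
  rw [Real.exp_sub, div_le_iff₀ (Real.exp_pos _)]
  calc Real.exp s ≤ c * 2.7182818283^m := h1
    _ ≤ c * Real.exp m := by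
        rw [← hem]; exact mul_le_mul_of_nonneg_left hm hc
    _ = c * Real.exp (m:ℝ) := by norm_num

/-- `c ≤ exp (s - m)` from rational arithmetic. -/
lemma num_le_exp_neg {s c : ℝ} (m : ℕ) (hs : 0 ≤ s) (hc : 0 ≤ c)
    (h : c * 2.7182818286^m ≤ (1 + s/128)^(128:ℕ)) : c ≤ Real.exp (s - m) := by
  have hm : (Real.exp 1)^m ≤ (2.7182818286:ℝ)^m :=
    pow_le_pow_left₀ (Real.exp_pos _).le Real.exp_one_lt_d9.le m
  have hem : (Real.exp 1)^m = Real.exp m := by rw [← Real.exp_nat_mul, mul_one]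
  rw [Real.exp_sub, le_div_iff₀ (Real.exp_pos _)]
  calc c * Real.exp (m:ℝ) = c * (Real.exp 1)^m := by rw [hem]
    _ ≤ c * 2.7182818286^m := mul_le_mul_of_nonneg_left hm hc
    _ ≤ (1 + s/128)^(128:ℕ) := h
    _ ≤ Real.exp s := num_le_exp hs le_rfl

lemma nA : Real.exp (-0.862) ≤ 0.4224 := by
  have h := exp_neg_le_num (s := 0.138) (c := 0.4224) 1 (by norm_num) (by norm_num)
    (by norm_num) (by norm_num)
  norm_num at h ⊢; exact h

lemma nAA : (0.17829:ℝ) ≤ Real.exp (-0.862) * Real.exp (-0.862) := by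
  rw [← Real.exp_add]
  have h := num_le_exp_neg (s := 0.276) (c := 0.17829) 2 (by norm_num) (by norm_num)
    (by norm_num)
  norm_num at h ⊢; exact h

lemma log_two_ge : (0.69:ℝ) ≤ Real.log 2 := by
  rw [Real.le_log_iff_exp_le (by norm_num : (0:ℝ) < 2)]
  exact exp_le_num (by norm_num) (by norm_num) (by norm_num) (by norm_num)

/-- tangent line bound for log. -/
lemma log_tangent {L : ℝ} (hL : 0 < L) (r : ℝ) : Real.log L ≤ r - 1 + Real.exp (-r) * L := by
  have h := Real.log_le_sub_one_of_pos (x := L * Real.exp (-r)) (by positivity)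
  rw [Real.log_mul (ne_of_gt hL) (ne_of_gt (Real.exp_pos _)), Real.log_exp] at h
  linarith



lemma n1 : Real.exp (-0.6932) ≤ 0.5003 := by
  have h := exp_neg_le_num (s := 0.3068) (c := 0.5003) 1 (by norm_num) (by norm_num)
    (by norm_num) (by norm_num)
  norm_num at h ⊢; exact h

lemma n2 : Real.exp (-1.3863) ≤ 0.2505 := by
  have h := exp_neg_le_num (s := 0.6137) (c := 0.2505) 2 (by norm_num) (by norm_num)
    (by norm_num) (by norm_num)
  norm_num at h ⊢; exact h

lemma n3 : Real.exp (-1.6094) ≤ 0.2003 := by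
  have h := exp_neg_le_num (s := 0.3906) (c := 0.2003) 2 (by norm_num) (by norm_num)
    (by norm_num) (by norm_num)
  norm_num at h ⊢; exact h

lemma n4 : Real.exp (-1.7316) ≤ 0.1772 := by
  have h := exp_neg_le_num (s := 0.2684) (c := 0.1772) 2 (by norm_num) (by norm_num)
    (by norm_num) (by norm_num)
  norm_num at h ⊢; exact h

lemma n5 : Real.exp (-1.8083) ≤ 0.1640 := by
  have h := exp_neg_le_num (s := 0.1917) (c := 0.1640) 2 (by norm_num) (by norm_num)
    (by norm_num) (by norm_num)
  norm_num at h ⊢; exact h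

lemma n6 : Real.exp (-1.8718) ≤ 0.1539 := by
  have h := exp_neg_le_num (s := 0.1282) (c := 0.1539) 2 (by norm_num) (by norm_num)
    (by norm_num) (by norm_num)
  norm_num at h ⊢; exact h

lemma n7 : Real.exp (-1.9315) ≤ 0.1450 := by
  have h := exp_neg_le_num (s := 0.0685) (c := 0.1450) 2 (by norm_num) (by norm_num)
    (by norm_num) (by norm_num)
  norm_num at h ⊢; exact h

lemma n8 : Real.exp (-1.9879) ≤ 0.1370 := by
  have h := exp_neg_le_num (s := 0.0121) (c := 0.1370) 2 (by norm_num) (by norm_num)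
    (by norm_num) (by norm_num)
  norm_num at h ⊢; exact h

lemma n9 : Real.exp (-2.07944) ≤ 0.1255 := by
  have h := exp_neg_le_num (s := 0.92056) (c := 0.1255) 3 (by norm_num) (by norm_num)
    (by norm_num) (by norm_num)
  norm_num at h ⊢; exact h

lemma q1 : (0.00273:ℝ) ≤ Real.exp (-5.9) := by
  have h := num_le_exp_neg (s := 0.1) (c := 0.00273) 6 (by norm_num) (by norm_num) (by norm_num)
  norm_num at h ⊢; exact h

lemma q2 : (0.001832:ℝ) ≤ Real.exp (-6.3) := by
  have h := num_le_exp_neg (s := 0.7) (c := 0.001832) 7 (by norm_num) (by norm_num) (by norm_num)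
  norm_num at h ⊢; exact h

lemma q3 : (0.00123:ℝ) ≤ Real.exp (-6.7) := by
  have h := num_le_exp_neg (s := 0.3) (c := 0.00123) 7 (by norm_num) (by norm_num) (by norm_num)
  norm_num at h ⊢; exact h

lemma q4 : (0.000822:ℝ) ≤ Real.exp (-7.1) := by
  have h := num_le_exp_neg (s := 0.9) (c := 0.000822) 8 (by norm_num) (by norm_num) (by norm_num)
  norm_num at h ⊢; exact h

lemma q5 : (0.000552:ℝ) ≤ Real.exp (-7.5) := by
  have h := num_le_exp_neg (s := 0.5) (c := 0.000552) 8 (by norm_num) (by norm_num) (by norm_num)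
  norm_num at h ⊢; exact h

lemma case_noT {L r ua : ℝ} (hL0 : 0 < L) (hua : Real.exp (-r) ≤ ua)
    (hlin : (1 - 0.8448 - ua) * L + 1.862 - r > 0) :
    2*L*Real.exp (-0.862) - 2*L^2*(Real.exp (-0.862)*Real.exp (-0.862))*Real.exp (-L)
      < L - Real.log L + 0.862 := by
  have ht := log_tangent hL0 r
  have h1 : Real.exp (-r) * L ≤ ua * L := mul_le_mul_of_nonneg_right hua hL0.le
  have h2 : 2*L*Real.exp (-0.862) ≤ 2*L*0.4224 :=
    mul_le_mul_of_nonneg_left nA (by positivity)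
  have h3 : 0 ≤ 2*L^2*(Real.exp (-0.862)*Real.exp (-0.862))*Real.exp (-L) := by positivity
  nlinarith [ht, h1, h2, h3, hlin]

lemma case_T {L r ua P lq : ℝ} (hP0 : 0 < P) (hPL : P ≤ L) (hua : Real.exp (-r) ≤ ua)
    (hlq : lq ≤ Real.exp (-L)) (hlq0 : 0 ≤ lq)
    (hlin : (1 - 0.8448 - ua) * L + 1.862 - r + 2*P^2*0.17829*lq > 0) :
    2*L*Real.exp (-0.862) - 2*L^2*(Real.exp (-0.862)*Real.exp (-0.862))*Real.exp (-L)
      < L - Real.log L + 0.862 := by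
  have hL0 : 0 < L := lt_of_lt_of_le hP0 hPL
  have ht := log_tangent hL0 r
  have h1 : Real.exp (-r) * L ≤ ua * L := mul_le_mul_of_nonneg_right hua hL0.le
  have h2 : 2*L*Real.exp (-0.862) ≤ 2*L*0.4224 :=
    mul_le_mul_of_nonneg_left nA (by positivity)
  have hT : 2*P^2*0.17829*lq ≤ 2*L^2*(Real.exp (-0.862)*Real.exp (-0.862))*Real.exp (-L) := by
    have hP2 : P^2 ≤ L^2 := by nlinarith
    have s1 : 2*P^2*0.17829 ≤ 2*L^2*(Real.exp (-0.862)*Real.exp (-0.862)) := by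
      nlinarith [nAA, hP2, sq_nonneg P]
    calc 2*P^2*0.17829*lq ≤ (2*L^2*(Real.exp (-0.862)*Real.exp (-0.862)))*lq :=
          mul_le_mul_of_nonneg_right s1 hlq0
      _ ≤ (2*L^2*(Real.exp (-0.862)*Real.exp (-0.862)))*Real.exp (-L) :=
          mul_le_mul_of_nonneg_left hlq (by positivity)
  nlinarith [ht, h1, h2, hT, hlin]

lemma main_ineq {L : ℝ} (hL69 : 0.69 ≤ L) :
    2*L*Real.exp (-0.862) - 2*L^2*(Real.exp (-0.862)*Real.exp (-0.862))*Real.exp (-L)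
      < L - Real.log L + 0.862 := by
  have hL0 : (0:ℝ) < L := by linarith
  rcases le_or_gt L 3.3 with h1|h1
  · exact case_noT hL0 n1 (by linarith)
  rcases le_or_gt L 4.6 with h2|h2
  · exact case_noT hL0 n2 (by linarith)
  rcases le_or_gt L 5.4 with h3|h3
  · exact case_noT hL0 n3 (by linarith)
  rcases le_or_gt L 5.9 with h4|h4
  · exact case_T (by norm_num : (0:ℝ) < 5.4) h3.le n4
      (q1.trans (Real.exp_le_exp.mpr (by linarith))) (by norm_num) (by linarith)
  rcases le_or_gt L 6.3 with h5|h5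
  · exact case_T (by norm_num : (0:ℝ) < 5.9) h4.le n5
      (q2.trans (Real.exp_le_exp.mpr (by linarith))) (by norm_num) (by linarith)
  rcases le_or_gt L 6.7 with h6|h6
  · exact case_T (by norm_num : (0:ℝ) < 6.3) h5.le n6
      (q3.trans (Real.exp_le_exp.mpr (by linarith))) (by norm_num) (by linarith)
  rcases le_or_gt L 7.1 with h7|h7
  · exact case_T (by norm_num : (0:ℝ) < 6.7) h6.le n7
      (q4.trans (Real.exp_le_exp.mpr (by linarith))) (by norm_num) (by linarith)
  rcases le_or_gt L 7.5 with h8|h8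
  · exact case_T (by norm_num : (0:ℝ) < 7.1) h7.le n8
      (q5.trans (Real.exp_le_exp.mpr (by linarith))) (by norm_num) (by linarith)
  · exact case_noT hL0 n9 (by linarith)



noncomputable def sg (x : Bool) : ℝ := if x then 1 else -1

lemma sum_pi_bool (m : ℕ) (g : Bool → ℝ) :
    ∑ ε : Fin m → Bool, ∏ j, g (ε j) = (g true + g false) ^ m := by
  induction m with
  | zero => simp
  | succ m ih =>
    have e1 : ∑ ε : Fin (m+1) → Bool, ∏ j, g (ε j)
        = ∑ p : Bool × (Fin m → Bool), ∏ j : Fin (m+1), g ((Fin.consEquiv fun _ => Bool) p j) :=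
      ((Fin.consEquiv fun _ => Bool).sum_comp (fun ε : Fin (m+1) → Bool => ∏ j, g (ε j))).symm
    have e2 : ∀ p : Bool × (Fin m → Bool),
        (∏ j : Fin (m+1), g ((Fin.consEquiv fun _ => Bool) p j)) = g p.1 * ∏ j, g (p.2 j) := by
      intro p
      rw [Fin.prod_univ_succ]
      simp [Fin.consEquiv]
    rw [e1, Finset.sum_congr rfl fun p _ => e2 p, Fintype.sum_prod_type]
    simp only [← Finset.mul_sum]
    rw [Fintype.sum_bool, ← add_mul, ih, pow_succ]
    ring

lemma count_ge (m : ℕ) (hm : 1 ≤ m) (lam : ℝ) (hl : 0 ≤ lam) :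
    (((Finset.univ :
        Finset (Fin m → Bool)).filter (fun ε => lam ≤ ∑ j, sg (ε j))).card : ℝ)
      ≤ 2^m * Real.exp (-lam^2/(2*m)) := by
  have hm0 : (0:ℝ) < m := by exact_mod_cast hm
  set t : ℝ := lam / m with htdef
  have ht : 0 ≤ t := div_nonneg hl hm0.le
  have step1 : (((Finset.univ :
        Finset (Fin m → Bool)).filter (fun ε => lam ≤ ∑ j, sg (ε j))).card : ℝ)
      ≤ ∑ ε : Fin m → Bool, Real.exp (t * (∑ j, sg (ε j)) - t * lam) := by
    calc (((Finset.univ :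
        Finset (Fin m → Bool)).filter (fun ε => lam ≤ ∑ j, sg (ε j))).card : ℝ)
        = ∑ _ε ∈ ((Finset.univ :
            Finset (Fin m → Bool)).filter (fun ε => lam ≤ ∑ j, sg (ε j))), (1:ℝ) := by simp
      _ ≤ ∑ ε ∈ ((Finset.univ :
            Finset (Fin m → Bool)).filter (fun ε => lam ≤ ∑ j, sg (ε j))),
            Real.exp (t * (∑ j, sg (ε j)) - t * lam) := by
          apply Finset.sum_le_sum
          intro ε hε
          have hS : lam ≤ ∑ j, sg (ε j) := (Finset.mem_filter.mp hε).2
          have hnn : 0 ≤ t * (∑ j, sg (ε j)) - t * lam := by nlinarith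
          simpa using Real.one_le_exp hnn
      _ ≤ ∑ ε : Fin m → Bool, Real.exp (t * (∑ j, sg (ε j)) - t * lam) :=
          Finset.sum_le_sum_of_subset_of_nonneg (Finset.filter_subset _ _)
            (fun ε _ _ => (Real.exp_pos _).le)
  have step2 : ∀ ε : Fin m → Bool,
      Real.exp (t * (∑ j, sg (ε j)) - t * lam)
        = (∏ j, Real.exp (t * sg (ε j))) * Real.exp (-(t*lam)) := by
    intro ε
    rw [← Real.exp_sum, ← Real.exp_add, Finset.mul_sum]
    ring_nf
  have step3 : ∑ ε : Fin m → Bool, ∏ j, Real.exp (t * sg (ε j))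
      = (Real.exp t + Real.exp (-t))^m := by
    rw [sum_pi_bool m (fun x => Real.exp (t * sg x))]
    norm_num [sg]
  have step4 : (Real.exp t + Real.exp (-t))^m ≤ (2 * Real.exp (t^2/2))^m := by
    apply pow_le_pow_left₀ (by positivity)
    have h := Real.cosh_le_exp_half_sq t
    rw [Real.cosh_eq] at h
    linarith
  have step5 : ((2 * Real.exp (t^2/2))^m : ℝ) * Real.exp (-(t*lam))
      = 2^m * Real.exp (-lam^2/(2*m)) := by
    rw [mul_pow, ← Real.exp_nat_mul, mul_assoc, ← Real.exp_add]
    congr 2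
    rw [htdef]
    field_simp
    ring
  calc (((Finset.univ :
        Finset (Fin m → Bool)).filter (fun ε => lam ≤ ∑ j, sg (ε j))).card : ℝ)
      ≤ ∑ ε : Fin m → Bool, Real.exp (t * (∑ j, sg (ε j)) - t * lam) := step1
    _ = (∑ ε : Fin m → Bool, ∏ j, Real.exp (t * sg (ε j))) * Real.exp (-(t*lam)) := by
        rw [Finset.sum_mul]; exact Finset.sum_congr rfl fun ε _ => step2 ε
    _ = (Real.exp t + Real.exp (-t))^m * Real.exp (-(t*lam)) := by rw [step3]
    _ ≤ (2 * Real.exp (t^2/2))^m * Real.exp (-(t*lam)) :=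
        mul_le_mul_of_nonneg_right step4 (Real.exp_pos _).le
    _ = 2^m * Real.exp (-lam^2/(2*m)) := step5

lemma count_abs (m : ℕ) (hm : 1 ≤ m) (lam : ℝ) (hl : 0 ≤ lam) :
    (((Finset.univ :
        Finset (Fin m → Bool)).filter (fun ε => lam < |∑ j, sg (ε j)|)).card : ℝ)
      ≤ 2^(m+1) * Real.exp (-lam^2/(2*m)) := by
  classical
  have hsub : ((Finset.univ : Finset (Fin m → Bool)).filter
        (fun ε => lam < |∑ j, sg (ε j)|))
      ⊆ ((Finset.univ : Finset (Fin m → Bool)).filter (fun ε => lam ≤ ∑ j, sg (ε j)))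
        ∪ ((Finset.univ : Finset (Fin m → Bool)).filter (fun ε => lam ≤ -∑ j, sg (ε j))) := by
    intro ε hε
    rw [Finset.mem_filter] at hε
    rcases lt_abs.mp hε.2 with h | h
    · exact Finset.mem_union_left _ (Finset.mem_filter.mpr ⟨Finset.mem_univ _, h.le⟩)
    · exact Finset.mem_union_right _ (Finset.mem_filter.mpr ⟨Finset.mem_univ _, h.le⟩)
  have hneg : (((Finset.univ : Finset (Fin m → Bool)).filter
        (fun ε => lam ≤ -∑ j, sg (ε j)))).card
      = (((Finset.univ : Finset (Fin m → Bool)).filter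
        (fun ε => lam ≤ ∑ j, sg (ε j)))).card := by
    apply Finset.card_nbij' (i := fun ε => fun j => !(ε j)) (j := fun ε => fun j => !(ε j))
    · intro ε hε
      rw [Finset.mem_coe, Finset.mem_filter] at hε ⊢
      refine ⟨Finset.mem_univ _, ?_⟩
      have hsg : ∀ j : Fin m, sg (!(ε j)) = - sg (ε j) := by
        intro j; cases ε j <;> simp [sg]
      rw [Finset.sum_congr rfl fun j _ => hsg j, Finset.sum_neg_distrib]
      exact hε.2
    · intro ε hε
      rw [Finset.mem_coe, Finset.mem_filter] at hε ⊢
      refine ⟨Finset.mem_univ _, ?_⟩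
      have hsg : ∀ j : Fin m, sg (!(ε j)) = - sg (ε j) := by
        intro j; cases ε j <;> simp [sg]
      rw [Finset.sum_congr rfl fun j _ => hsg j, Finset.sum_neg_distrib]
      linarith [hε.2]
    · intro ε _; funext j; simp
    · intro ε _; funext j; simp
  have habs := Finset.card_le_card hsub
  have hun := Finset.card_union_le
    ((Finset.univ : Finset (Fin m → Bool)).filter (fun ε => lam ≤ ∑ j, sg (ε j)))
    ((Finset.univ : Finset (Fin m → Bool)).filter (fun ε => lam ≤ -∑ j, sg (ε j)))
  have hcg := count_ge m hm lam hl
  have hNN : ((Finset.univ : Finset (Fin m → Bool)).filter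
      (fun ε => lam < |∑ j, sg (ε j)|)).card
      ≤ 2 * ((Finset.univ : Finset (Fin m → Bool)).filter
        (fun ε => lam ≤ ∑ j, sg (ε j))).card := by
    have h2 := le_trans habs hun
    linarith [h2, hneg]
  have : (((Finset.univ : Finset (Fin m → Bool)).filter
      (fun ε => lam < |∑ j, sg (ε j)|)).card : ℝ)
      ≤ 2 * (((Finset.univ : Finset (Fin m → Bool)).filter
        (fun ε => lam ≤ ∑ j, sg (ε j))).card : ℝ) := by
    exact_mod_cast hNN
  calc (((Finset.univ : Finset (Fin m → Bool)).filter
      (fun ε => lam < |∑ j, sg (ε j)|)).card : ℝ)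
      ≤ 2 * (((Finset.univ : Finset (Fin m → Bool)).filter
        (fun ε => lam ≤ ∑ j, sg (ε j))).card : ℝ) := this
    _ ≤ 2 * (2^m * Real.exp (-lam^2/(2*m))) := by linarith
    _ = 2^(m+1) * Real.exp (-lam^2/(2*m)) := by ring


lemma count_shift (n k : ℕ) (hk1 : 1 ≤ k) (hkn : k < n) (lam : ℝ) :
    ((Finset.univ : Finset (Fin n → Bool)).filter
        (fun b => lam < |autocorr b k|)).card
      ≤ 2^k * ((Finset.univ : Finset (Fin (n-k) → Bool)).filter
        (fun ε => lam < |∑ j, sg (ε j)|)).card := by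
  classical
  have hjn : ∀ j : Fin (n - k), (j : ℕ) < n := fun j => lt_of_lt_of_le j.isLt (Nat.sub_le n k)
  have hjkn : ∀ j : Fin (n - k), (j : ℕ) + k < n := fun j => by
    have := j.isLt; omega
  set φ : (Fin n → Bool) → (Fin (n-k) → Bool) :=
    fun b j => b ⟨j, hjn j⟩ == b ⟨(j : ℕ) + k, hjkn j⟩ with hφ
  have hac : ∀ b : Fin n → Bool, autocorr b k = ∑ j, sg (φ b j) := by
    intro b
    rw [autocorr, ← Fin.sum_univ_eq_sum_range (fun j => rad b j * rad b (j + k)) (n - k)]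
    apply Finset.sum_congr rfl
    intro j _
    have h1 : (j : ℕ) < n := hjn j
    have h2 : (j : ℕ) + k < n := hjkn j
    rw [hφ]
    simp only [rad, dif_pos (hjn j), dif_pos (hjkn j), sg]
    have hxy : ∀ x y : Bool, ((if x = true then (1:ℝ) else -1) * (if y = true then 1 else -1))
        = if (x == y) = true then 1 else -1 := by
      intro x y; cases x <;> cases y <;> norm_num
    exact hxy _ _
  set s := (Finset.univ : Finset (Fin n → Bool)).filter (fun b => lam < |autocorr b k|) with hs
  set tZ := (Finset.univ : Finset (Fin (n-k) → Bool)).filter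
    (fun ε => lam < |∑ j, sg (ε j)|) with htZ
  have hmap : ∀ b ∈ s, φ b ∈ tZ := by
    intro b hb
    rw [hs, Finset.mem_filter] at hb
    rw [htZ, Finset.mem_filter]
    exact ⟨Finset.mem_univ _, by rw [← hac b]; exact hb.2⟩
  rw [Finset.card_eq_sum_card_fiberwise hmap]
  have hfiber : ∀ ε ∈ tZ, (s.filter (fun b => φ b = ε)).card ≤ 2^k := by
    intro ε _
    have hinj : Set.InjOn (fun b : Fin n → Bool => fun i : Fin k => b ⟨i, lt_trans i.isLt hkn⟩)
        (s.filter (fun b => φ b = ε)) := by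
      intro b hb b' hb' heq
      simp only [Finset.coe_filter, Set.mem_setOf_eq] at hb hb'
      have hφeq : φ b = φ b' := by rw [hb.2, hb'.2]
      have key : ∀ j : ℕ, ∀ h : j < n, b ⟨j, h⟩ = b' ⟨j, h⟩ := by
        intro j
        induction j using Nat.strong_induction_on with
        | _ j ih =>
          intro h
          by_cases hjk : j < k
          · have := congrFun heq ⟨j, hjk⟩
            simpa using this
          · push_neg at hjk
            have hlt : j - k < n - k := by omega
            have hjj : j - k < j := by omega
            have hjkn' : j - k + k < n := by omega
            have e1 := congrFun hφeq ⟨j - k, hlt⟩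
            rw [hφ] at e1
            simp only at e1
            have hidx : (⟨((⟨j - k, hlt⟩ : Fin (n-k)) : ℕ) + k,
                hjkn ⟨j - k, hlt⟩⟩ : Fin n) = ⟨j, h⟩ := by
              apply Fin.ext
              simp
              omega
            rw [hidx] at e1
            have e2 := ih (j - k) hjj (by omega : j - k < n)
            rw [e2] at e1
            have hbeq : ∀ (x y z : Bool), (x == y) = (x == z) → y = z := by decide
            exact (hbeq _ _ _ e1.symm).symm
      funext i
      exact key i.1 i.2
    have := Finset.card_le_card_of_injOn _
      (fun b _ => Finset.mem_univ (fun i : Fin k => b ⟨i, lt_trans i.isLt hkn⟩)) hinj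
    calc (s.filter (fun b => φ b = ε)).card
        ≤ (Finset.univ : Finset (Fin k → Bool)).card := this
      _ = 2^k := by simp
  calc ∑ ε ∈ tZ, (s.filter (fun b => φ b = ε)).card
      ≤ ∑ _ε ∈ tZ, 2^k := Finset.sum_le_sum hfiber
    _ = tZ.card * 2^k := by rw [Finset.sum_const, smul_eq_mul]
    _ = 2^k * tZ.card := mul_comm _ _

end PSLAux

theorem stmt_15 (n : ℕ) (hn : 1 < n) :
    ∃ b : Fin n → Bool,
      psl b ≤ Real.sqrt (2 * n * (Real.log n - Real.log (Real.log n) + 0.862)) := by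
  classical
  have hn2 : (2:ℝ) ≤ (n:ℝ) := by exact_mod_cast hn
  have hn0 : (0:ℝ) < (n:ℝ) := by linarith
  set L := Real.log (n:ℝ) with hLdef
  have hL69 : (0.69:ℝ) ≤ L := le_trans PSLAux.log_two_ge (Real.log_le_log (by norm_num) hn2)
  have hL0 : (0:ℝ) < L := by linarith
  set β := L - Real.log L + 0.862 with hβdef
  have hβ0 : (0:ℝ) < β := by
    have h := Real.log_le_sub_one_of_pos hL0
    rw [hβdef]; linarith
  set lam := Real.sqrt (2 * (n:ℝ) * β) with hlamdef
  have hlam0 : (0:ℝ) ≤ lam := Real.sqrt_nonneg _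
  have hlam2 : lam^2 = 2 * (n:ℝ) * β := by
    rw [hlamdef]; exact Real.sq_sqrt (by positivity)
  set Bad := (Finset.Icc 1 (n-1)).biUnion
    (fun k => Finset.univ.filter (fun b : Fin n → Bool => lam < |autocorr b k|)) with hBad
  clear_value L β lam
  have hcard1 : Bad.card ≤ ∑ k ∈ Finset.Icc 1 (n-1),
      (Finset.univ.filter (fun b : Fin n → Bool => lam < |autocorr b k|)).card := by
    rw [hBad]
    exact Finset.card_biUnion_le
  have hterm : ∀ k ∈ Finset.Icc 1 (n-1),
      ((Finset.univ.filter (fun b : Fin n → Bool => lam < |autocorr b k|)).card : ℝ)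
        ≤ 2^(n+1) * Real.exp (-lam^2/(2*((n-k : ℕ) : ℝ))) := by
    intro k hk
    rw [Finset.mem_Icc] at hk
    have hk1 : 1 ≤ k := hk.1
    have hkn : k < n := by omega
    have hm1 : 1 ≤ n - k := by omega
    have hknn : k + (n - k + 1) = n + 1 := by omega
    have c1 := PSLAux.count_shift n k hk1 hkn lam
    have c2 := PSLAux.count_abs (n-k) hm1 lam hlam0
    calc ((Finset.univ.filter (fun b : Fin n → Bool => lam < |autocorr b k|)).card : ℝ)
        ≤ (2:ℝ)^k * (((Finset.univ : Finset (Fin (n-k) → Bool)).filter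
            (fun ε => lam < |∑ j, PSLAux.sg (ε j)|)).card : ℝ) := by
          exact_mod_cast c1
      _ ≤ (2:ℝ)^k * (2^(n-k+1) * Real.exp (-lam^2/(2*((n-k : ℕ):ℝ)))) :=
          mul_le_mul_of_nonneg_left c2 (by positivity)
      _ = 2^(n+1) * Real.exp (-lam^2/(2*((n-k : ℕ):ℝ))) := by
          rw [← mul_assoc, ← pow_add, hknn]
  set r := Real.exp (β / (n:ℝ)) with hrdef
  clear_value r
  have hr1 : 1 < r := by
    rw [hrdef]; exact Real.one_lt_exp_iff.mpr (div_pos hβ0 hn0)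
  have expo_le : ∀ m ∈ Finset.Icc 1 (n-1),
      Real.exp (-lam^2/(2*(m:ℝ))) ≤ Real.exp (-(2*β)) * r^m := by
    intro m hm
    rw [Finset.mem_Icc] at hm
    have hm0 : (0:ℝ) < (m:ℝ) := by exact_mod_cast hm.1
    have hmn : (m:ℝ) ≤ (n:ℝ) := by
      have h1 : m ≤ n := le_trans hm.2 (Nat.sub_le n 1)
      exact_mod_cast h1
    rw [hrdef, ← Real.exp_nat_mul, ← Real.exp_add]
    apply Real.exp_le_exp.mpr
    rw [hlam2]
    have expand : -(2*β) + (m:ℝ)*(β/(n:ℝ)) - (-(2*(n:ℝ)*β)/(2*(m:ℝ)))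
        = β*((n:ℝ)-(m:ℝ))^2/((n:ℝ)*(m:ℝ)) := by
      field_simp
      ring
    have hnn : (0:ℝ) ≤ β*((n:ℝ)-(m:ℝ))^2/((n:ℝ)*(m:ℝ)) :=
      div_nonneg (mul_nonneg hβ0.le (sq_nonneg _)) (by positivity)
    linarith [expand, hnn]
  have hsum1 : ∑ k ∈ Finset.Icc 1 (n-1), Real.exp (-lam^2/(2*((n-k : ℕ):ℝ)))
      = ∑ m ∈ Finset.Icc 1 (n-1), Real.exp (-lam^2/(2*(m:ℝ))) := by
    apply Finset.sum_nbij' (i := fun k => n - k) (j := fun m => n - m)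
    · intro a ha; rw [Finset.mem_Icc] at ha ⊢; omega
    · intro a ha; rw [Finset.mem_Icc] at ha ⊢; omega
    · intro a ha; rw [Finset.mem_Icc] at ha; omega
    · intro a ha; rw [Finset.mem_Icc] at ha; omega
    · intro a ha; rfl
  have hsum2 : ∑ m ∈ Finset.Icc 1 (n-1), Real.exp (-lam^2/(2*(m:ℝ)))
      ≤ Real.exp (-(2*β)) * ∑ m ∈ Finset.Icc 1 (n-1), r^m := by
    rw [Finset.mul_sum]; exact Finset.sum_le_sum expo_le
  have hsum3 : ∑ m ∈ Finset.Icc 1 (n-1), r^m ≤ ∑ m ∈ Finset.range n, r^m := by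
    apply Finset.sum_le_sum_of_subset_of_nonneg
    · intro m hm; rw [Finset.mem_Icc] at hm; rw [Finset.mem_range]; omega
    · intro m _ _; exact pow_nonneg (le_trans zero_le_one hr1.le) m
  have hgeom : ∑ m ∈ Finset.range n, r^m = (r^n - 1)/(r - 1) := geom_sum_eq (ne_of_gt hr1) n
  have hrn : r^n = Real.exp β := by
    rw [hrdef, ← Real.exp_nat_mul]
    congr 1
    rw [mul_comm, div_mul_cancel₀ _ (ne_of_gt hn0)]
  have hrb : β/(n:ℝ) ≤ r - 1 := by
    have h := Real.add_one_le_exp (β/(n:ℝ))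
    rw [hrdef]; linarith
  have h1exp : (0:ℝ) ≤ Real.exp β - 1 := by
    have h := Real.add_one_le_exp β; linarith
  have hfrac : (r^n - 1)/(r - 1) ≤ (Real.exp β - 1)*((n:ℝ)/β) := by
    rw [hrn]
    have h2 : (0:ℝ) < β/(n:ℝ) := div_pos hβ0 hn0
    calc (Real.exp β - 1)/(r-1) ≤ (Real.exp β - 1)/(β/(n:ℝ)) :=
          div_le_div_of_nonneg_left h1exp h2 hrb
      _ = (Real.exp β - 1)*((n:ℝ)/β) := by
          rw [div_div_eq_mul_div, mul_div_assoc]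
  have hA : Real.exp (-β) = L * Real.exp (-0.862) * Real.exp (-L) := by
    rw [hβdef, show -(L - Real.log L + 0.862) = Real.log L + -0.862 + -L from by ring,
      Real.exp_add, Real.exp_add, Real.exp_log hL0]
  have heL : Real.exp (-L) * (n:ℝ) = 1 := by
    rw [hLdef, Real.exp_neg, Real.exp_log hn0]
    exact inv_mul_cancel₀ (ne_of_gt hn0)
  have hmain := PSLAux.main_ineq hL69
  have hfin : Real.exp (-(2*β)) * ((Real.exp β - 1)*((n:ℝ)/β)) < 1/2 := by
    have hXY : Real.exp (-β) * Real.exp β = 1 := by rw [← Real.exp_add]; simp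
    have e2β : Real.exp (-(2*β)) = Real.exp (-β) * Real.exp (-β) := by
      rw [← Real.exp_add]; congr 1; ring
    have e1 : Real.exp (-β) * Real.exp (-β) * (Real.exp β - 1)
        = Real.exp (-β) - Real.exp (-β) * Real.exp (-β) := by
      linear_combination Real.exp (-β) * hXY
    have hXn : Real.exp (-β) * (n:ℝ) = L * Real.exp (-0.862) := by
      rw [hA]; linear_combination (L * Real.exp (-0.862)) * heL
    have hX2n : Real.exp (-β) * Real.exp (-β) * (n:ℝ)
        = L^2 * (Real.exp (-0.862) * Real.exp (-0.862)) * Real.exp (-L) := by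
      rw [hA]
      linear_combination (L^2 * (Real.exp (-0.862) * Real.exp (-0.862)) * Real.exp (-L)) * heL
    have h2b : (0:ℝ) < 2*β := by linarith
    rw [e2β]
    apply (mul_lt_mul_iff_left₀ h2b).mp
    have hb' : β ≠ 0 := ne_of_gt hβ0
    have hinv : β⁻¹ * β = 1 := inv_mul_cancel₀ hb'
    have hnb : (n:ℝ)/β*(2*β) = 2*(n:ℝ) := by
      linear_combination (2*(n:ℝ)) * hinv
    have lhs_eq : Real.exp (-β) * Real.exp (-β) * ((Real.exp β - 1)*((n:ℝ)/β)) * (2*β)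
        = 2*(Real.exp (-β)*(n:ℝ)) - 2*(Real.exp (-β)*Real.exp (-β)*(n:ℝ)) := by
      calc Real.exp (-β) * Real.exp (-β) * ((Real.exp β - 1)*((n:ℝ)/β)) * (2*β)
          = (Real.exp (-β) * Real.exp (-β) * (Real.exp β - 1)) * ((n:ℝ)/β*(2*β)) := by ring
        _ = (Real.exp (-β) * Real.exp (-β) * (Real.exp β - 1)) * (2*(n:ℝ)) := by rw [hnb]
        _ = 2*(Real.exp (-β)*(n:ℝ)) - 2*(Real.exp (-β)*Real.exp (-β)*(n:ℝ)) := by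
            linear_combination (2*(n:ℝ)) * e1
    rw [lhs_eq, hXn, hX2n]
    linarith [hmain, hβdef]
  have hsumlt : ∑ k ∈ Finset.Icc 1 (n-1), Real.exp (-lam^2/(2*((n-k : ℕ):ℝ))) < 1/2 := by
    calc ∑ k ∈ Finset.Icc 1 (n-1), Real.exp (-lam^2/(2*((n-k : ℕ):ℝ)))
        = ∑ m ∈ Finset.Icc 1 (n-1), Real.exp (-lam^2/(2*(m:ℝ))) := hsum1
      _ ≤ Real.exp (-(2*β)) * ∑ m ∈ Finset.Icc 1 (n-1), r^m := hsum2
      _ ≤ Real.exp (-(2*β)) * ((Real.exp β - 1)*((n:ℝ)/β)) := by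
          apply mul_le_mul_of_nonneg_left _ (Real.exp_pos _).le
          calc ∑ m ∈ Finset.Icc 1 (n-1), r^m ≤ ∑ m ∈ Finset.range n, r^m := hsum3
            _ = (r^n - 1)/(r - 1) := hgeom
            _ ≤ (Real.exp β - 1)*((n:ℝ)/β) := hfrac
      _ < 1/2 := hfin
  have hcardR : (Bad.card : ℝ) < 2^n := by
    calc (Bad.card : ℝ)
        ≤ ∑ k ∈ Finset.Icc 1 (n-1),
            ((Finset.univ.filter (fun b : Fin n → Bool => lam < |autocorr b k|)).card : ℝ) := by
          exact_mod_cast hcard1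
      _ ≤ ∑ k ∈ Finset.Icc 1 (n-1), 2^(n+1) * Real.exp (-lam^2/(2*((n-k : ℕ):ℝ))) :=
          Finset.sum_le_sum hterm
      _ = 2^(n+1) * ∑ k ∈ Finset.Icc 1 (n-1), Real.exp (-lam^2/(2*((n-k : ℕ):ℝ))) := by
          rw [Finset.mul_sum]
      _ < 2^(n+1) * (1/2) := mul_lt_mul_of_pos_left hsumlt (by positivity)
      _ = 2^n := by rw [pow_succ]; ring
  have hcardN : Bad.card < 2^n := by exact_mod_cast hcardR
  have hnotsub : ¬ (Finset.univ : Finset (Fin n → Bool)) ⊆ Bad := by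
    intro hsub
    have h1 := Finset.card_le_card hsub
    rw [Finset.card_univ] at h1
    have h2 : Fintype.card (Fin n → Bool) = 2^n := by simp
    omega
  obtain ⟨b, -, hb⟩ := Finset.not_subset.mp hnotsub
  refine ⟨b, ?_⟩
  have hgood : ∀ k ∈ Finset.Icc 1 (n-1), |autocorr b k| ≤ lam := by
    intro k hk
    by_contra hcon
    push_neg at hcon
    refine hb ?_
    rw [hBad]
    exact Finset.mem_biUnion.mpr ⟨k, hk, Finset.mem_filter.mpr ⟨Finset.mem_univ _, hcon⟩⟩
  show (⨆ k ∈ Finset.Icc 1 (n - 1), |autocorr b k|) ≤ lam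
  exact Real.iSup_le (fun k => Real.iSup_le (fun hk => hgood k hk) hlam0) hlam0
end
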